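/- arXiv:1701.06033 — 4 statements merged into one kernel-verified Lean document; each statement's English description precedes it below -/
import Mathlib

section
/- Suppose U, V ⊆ [n] are disjoint sets such that H[X_U | Y_N] = 0 and H[X_{[n]∖(U∪V)} | Y_N, X_{U∪V}] = 0. Then H[X_{[n]}] = H[Y_N] + H[X_V | Y_N, X_U]. (Lemma 1 of the paper.) -/
/-!
Setup for the distributed index coding problem: `n` messages `X i` (finitely valued
random variables on a probability space `(Ω, μ)`), one server for each nonempty
subset `J` of `Fin n`, whose output `Y_J = φ_J (X_J)` is a deterministic function of
the messages indexed by `J`.  Shannon entropy `ent` and conditional entropy `cent`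
are defined from scratch (Mathlib has no Shannon entropy of a random variable).
-/

open MeasureTheory Real

namespace DistIndexCoding

variable {Ω : Type*} [MeasurableSpace Ω]

/-- Shannon entropy (in nats) of a finitely-valued random variable. -/
noncomputable def ent {α : Type*} [Fintype α] (μ : Measure Ω) (X : Ω → α) : ℝ :=
  ∑ a : α, negMulLog (μ (X ⁻¹' {a})).toReal

/-- Conditional entropy `H[X | Y]`, defined via the chain rule `H[X|Y] = H[X,Y] - H[Y]`. -/
noncomputable def cent {α β : Type*} [Fintype α] [Fintype β]
    (μ : Measure Ω) (X : Ω → α) (Y : Ω → β) : ℝ :=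
  ent μ (fun ω => (X ω, Y ω)) - ent μ Y

variable {n : ℕ} {𝒳 : Fin n → Type*} {𝒴 : Finset (Fin n) → Type*}

/-- The subtuple `X_S = (X_i : i ∈ S)`. -/
def subtuple (X : ∀ i, Ω → 𝒳 i) (S : Finset (Fin n)) : Ω → (∀ i : S, 𝒳 i.1) :=
  fun ω i => X i.1 ω

/-- The tuple of server outputs `(Y_J = φ_J(X_J) : J satisfying p)`. -/
def outputs (φ : ∀ J : Finset (Fin n), (∀ j : J, 𝒳 j.1) → 𝒴 J)
    (X : ∀ i, Ω → 𝒳 i) (p : Finset (Fin n) → Prop) [DecidablePred p] :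
    Ω → (∀ J : {J : Finset (Fin n) // p J}, 𝒴 J.1) :=
  fun ω J => φ J.1 (fun j => X j.1 ω)

/-- If `Z` and `W` are deterministic functions of each other, they have the same entropy. -/
lemma ent_congr {α β : Type*} [Fintype α] [Fintype β] (μ : Measure Ω)
    (Z : Ω → α) (W : Ω → β) (f : α → β) (g : β → α)
    (hf : ∀ ω, W ω = f (Z ω)) (hg : ∀ ω, Z ω = g (W ω)) :
    ent μ W = ent μ Z := by
  classical
  have hW0 : ∀ b : β, f (g b) ≠ b → W ⁻¹' {b} = ∅ := by
    intro b hb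
    ext ω
    simp only [Set.mem_preimage, Set.mem_singleton_iff, Set.mem_empty_iff_false, iff_false]
    intro h
    exact hb (by rw [← h, ← hg, ← hf])
  have hZ0 : ∀ a : α, g (f a) ≠ a → Z ⁻¹' {a} = ∅ := by
    intro a ha
    ext ω
    simp only [Set.mem_preimage, Set.mem_singleton_iff, Set.mem_empty_iff_false, iff_false]
    intro h
    exact ha (by rw [← h, ← hf, ← hg])
  have key : ∀ b : β, f (g b) = b → W ⁻¹' {b} = Z ⁻¹' {g b} := by
    intro b hb
    ext ω
    simp only [Set.mem_preimage, Set.mem_singleton_iff]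
    constructor
    · intro h; rw [hg, h]
    · intro h; rw [hf, h, hb]
  unfold ent
  have e1 : ∑ b : β, negMulLog (μ (W ⁻¹' {b})).toReal
      = ∑ b ∈ Finset.univ.filter (fun b => f (g b) = b),
          negMulLog (μ (W ⁻¹' {b})).toReal := by
    refine (Finset.sum_filter_of_ne ?_).symm
    intro b _ hne
    by_contra h
    rw [hW0 b h] at hne
    simp at hne
  have e2 : ∑ a : α, negMulLog (μ (Z ⁻¹' {a})).toReal
      = ∑ a ∈ Finset.univ.filter (fun a => g (f a) = a),
          negMulLog (μ (Z ⁻¹' {a})).toReal := by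
    refine (Finset.sum_filter_of_ne ?_).symm
    intro a _ hne
    by_contra h
    rw [hZ0 a h] at hne
    simp at hne
  rw [e1, e2]
  refine Finset.sum_nbij' g f ?_ ?_ ?_ ?_ ?_
  · intro b hb
    simp only [Finset.mem_filter, Finset.mem_univ, true_and] at hb ⊢
    rw [hb]
  · intro a ha
    simp only [Finset.mem_filter, Finset.mem_univ, true_and] at ha ⊢
    rw [ha]
  · intro b hb
    simp only [Finset.mem_filter, Finset.mem_univ, true_and] at hb
    exact hb
  · intro a ha
    simp only [Finset.mem_filter, Finset.mem_univ, true_and] at ha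
    exact ha
  · intro b hb
    simp only [Finset.mem_filter, Finset.mem_univ, true_and] at hb
    rw [key b hb]

/-- **Lemma 1**: if `U, V ⊆ [n]` are disjoint, `H[X_U | Y_N] = 0` and
`H[X_{[n]∖(U∪V)} | Y_N, X_{U∪V}] = 0`, then
`H[X_{[n]}] = H[Y_N] + H[X_V | Y_N, X_U]`. -/
theorem lemma1
    [∀ i, Fintype (𝒳 i)] [∀ i, Nonempty (𝒳 i)] [∀ J, Fintype (𝒴 J)]
    (μ : Measure Ω) [IsProbabilityMeasure μ]
    (X : ∀ i, Ω → 𝒳 i) (φ : ∀ J : Finset (Fin n), (∀ j : J, 𝒳 j.1) → 𝒴 J)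
    (U V : Finset (Fin n)) (hUV : Disjoint U V)
    (hU : cent μ (subtuple X U) (outputs φ X (fun J => J.Nonempty)) = 0)
    (hRest : cent μ (subtuple X (Finset.univ \ (U ∪ V)))
      (fun ω => (outputs φ X (fun J => J.Nonempty) ω, subtuple X (U ∪ V) ω)) = 0) :
    ent μ (subtuple X Finset.univ)
      = ent μ (outputs φ X (fun J => J.Nonempty))
        + cent μ (subtuple X V)
            (fun ω => (outputs φ X (fun J => J.Nonempty) ω, subtuple X U ω)) := by
  classical
  set Y := outputs φ X (fun J => J.Nonempty) with hY
  -- Step A : `X_[n]` and `(X_rest, (Y, X_{U∪V}))` determine each other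
  have stepA : ent μ (fun ω => (subtuple X (Finset.univ \ (U ∪ V)) ω,
        (Y ω, subtuple X (U ∪ V) ω))) = ent μ (subtuple X Finset.univ) := by
    refine ent_congr μ (subtuple X Finset.univ) _
      (fun x => (fun i => x ⟨i.1, Finset.mem_univ _⟩,
        ((fun J => φ J.1 (fun j => x ⟨j.1, Finset.mem_univ _⟩)),
          fun i => x ⟨i.1, Finset.mem_univ _⟩)))
      (fun t => fun i => if h : i.1 ∈ U ∪ V then t.2.2 ⟨i.1, h⟩
        else t.1 ⟨i.1, by simp [h]⟩) (fun ω => rfl) ?_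
    intro ω
    funext i
    by_cases h : i.1 ∈ U ∪ V <;> simp [h, subtuple]
  -- Step B : from `hRest`
  have stepB : ent μ (fun ω => (subtuple X (Finset.univ \ (U ∪ V)) ω,
        (Y ω, subtuple X (U ∪ V) ω)))
      = ent μ (fun ω => (Y ω, subtuple X (U ∪ V) ω)) := by
    have := sub_eq_zero.mp hRest
    exact this
  -- Step C : `(Y, X_{U∪V})` and `(X_V, (Y, X_U))` determine each other
  have stepC : ent μ (fun ω => (subtuple X V ω, (Y ω, subtuple X U ω)))
      = ent μ (fun ω => (Y ω, subtuple X (U ∪ V) ω)) := by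
    refine ent_congr μ _ _
      (fun t => ((fun i => t.2 ⟨i.1, Finset.mem_union_right _ i.2⟩),
        (t.1, fun i => t.2 ⟨i.1, Finset.mem_union_left _ i.2⟩)))
      (fun t => (t.2.1, fun i => if h : i.1 ∈ U then t.2.2 ⟨i.1, h⟩
        else t.1 ⟨i.1, by
          rcases Finset.mem_union.mp i.2 with h' | h'
          · exact absurd h' h
          · exact h'⟩)) (fun ω => rfl) ?_
    intro ω
    refine Prod.ext rfl ?_
    funext i
    by_cases h : i.1 ∈ U <;> simp [h, subtuple]
  -- Step D : `ent (Y, X_U) = ent (X_U, Y) = ent Y`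
  have swapUY : ent μ (fun ω => (Y ω, subtuple X U ω))
      = ent μ (fun ω => (subtuple X U ω, Y ω)) :=
    ent_congr μ _ _ Prod.swap Prod.swap (fun ω => rfl) (fun ω => rfl)
  have stepD : ent μ (fun ω => (Y ω, subtuple X U ω)) = ent μ Y := by
    rw [swapUY]
    exact sub_eq_zero.mp hU
  -- Conclude
  rw [cent, stepC, stepD, ← stepB, stepA]
  ring

end DistIndexCoding
end

section
/- Suppose the random variables X_1, …, X_n are mutually independent, U, V ⊆ [n] are disjoint, U ⊆ V̄, and V satisfies H[X_V | Y_N, X_{V̄}] = 0. Let P = {J ∈ N : J ∩ V ≠ ∅}. Then H[X_V] ≤ H[Y_P | X_U]. -/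
/-!
Setup for the distributed index coding problem: `n` messages `X i` (finitely valued
random variables on a probability space `(Ω, μ)`), one server for each nonempty
subset `J` of `Fin n`, whose output `Y_J = φ_J (X_J)` is a deterministic function of
the messages indexed by `J`.  Shannon entropy `ent`, conditional entropy `cent` and
conditional mutual information `cmi` are defined from scratch.
-/

open MeasureTheory Real

namespace DistIndexCoding

variable {Ω : Type*} [MeasurableSpace Ω]

/-- Conditional mutual information `I[X : Y | Z] = H[X | Z] - H[X | Y, Z]`. -/
noncomputable def cmi {α β γ : Type*} [Fintype α] [Fintype β] [Fintype γ]
    (μ : Measure Ω) (X : Ω → α) (Y : Ω → β) (Z : Ω → γ) : ℝ :=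
  cent μ X Z - cent μ X (fun ω => (Y ω, Z ω))

section Aux

variable {α β : Type*} [Fintype α] [Fintype β] {μ : Measure Ω}

/-- All preimages are measurable. -/
def DM (A : Ω → α) : Prop := ∀ s : Set α, MeasurableSet (A ⁻¹' s)

lemma dm_comp {γ : Type*} [Finite γ] [MeasurableSpace γ] [MeasurableSingletonClass γ]
    {W : Ω → γ} (hW : Measurable W) (F : γ → α) : DM (fun ω => F (W ω)) :=
  fun s => hW ((F ⁻¹' s).toFinite.measurableSet)

lemma sum_meas_eq_one [IsProbabilityMeasure μ] {A : Ω → α} (hA : DM A) :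
    ∑ a : α, (μ (A ⁻¹' {a})).toReal = 1 := by
  rw [← ENNReal.toReal_sum (fun a _ => measure_ne_top μ _),
    sum_measure_preimage_singleton _ (fun a _ => hA {a})]
  simp

lemma meas_fst [IsProbabilityMeasure μ] {A : Ω → α} {B : Ω → β} (h : DM (fun ω => (A ω, B ω))) (a : α) :
    (μ (A ⁻¹' {a})).toReal = ∑ b : β, (μ ((fun ω => (A ω, B ω)) ⁻¹' {(a, b)})).toReal := by
  classical
  rw [← ENNReal.toReal_sum (fun b _ => measure_ne_top μ _)]
  congr 1
  have hinj : ∀ x ∈ Finset.univ, ∀ y ∈ Finset.univ,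
      (fun b : β => (a, b)) x = (fun b : β => (a, b)) y → x = y := by
    intro x _ y _ hxy
    exact congrArg Prod.snd hxy
  have h1 := Finset.sum_image (g := fun b : β => (a, b)) (f := fun p : α × β => μ ((fun ω => (A ω, B ω)) ⁻¹' {p})) hinj
  have h2 := sum_measure_preimage_singleton (μ := μ)
    (Finset.univ.image (fun b : β => (a, b))) (f := fun ω => (A ω, B ω)) (fun p _ => h {p})
  have h3 : ((fun ω => (A ω, B ω)) ⁻¹' ↑(Finset.univ.image (fun b : β => (a, b)))) = A ⁻¹' {a} := by
    ext ω; simp [Prod.ext_iff, eq_comm]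
  rw [h1, h3] at h2
  exact h2.symm

lemma meas_snd [IsProbabilityMeasure μ] {A : Ω → α} {B : Ω → β} (h : DM (fun ω => (A ω, B ω))) (b : β) :
    (μ (B ⁻¹' {b})).toReal = ∑ a : α, (μ ((fun ω => (A ω, B ω)) ⁻¹' {(a, b)})).toReal := by
  classical
  rw [← ENNReal.toReal_sum (fun a _ => measure_ne_top μ _)]
  congr 1
  have hinj : ∀ x ∈ Finset.univ, ∀ y ∈ Finset.univ,
      (fun a : α => (a, b)) x = (fun a : α => (a, b)) y → x = y := by
    intro x _ y _ hxy
    exact congrArg Prod.fst hxy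
  have h1 := Finset.sum_image (g := fun a : α => (a, b)) (f := fun p : α × β => μ ((fun ω => (A ω, B ω)) ⁻¹' {p})) hinj
  have h2 := sum_measure_preimage_singleton (μ := μ)
    (Finset.univ.image (fun a : α => (a, b))) (f := fun ω => (A ω, B ω)) (fun p _ => h {p})
  have h3 : ((fun ω => (A ω, B ω)) ⁻¹' ↑(Finset.univ.image (fun a : α => (a, b)))) = B ⁻¹' {b} := by
    ext ω; simp [Prod.ext_iff, eq_comm]
  rw [h1, h3] at h2
  exact h2.symm

lemma ent_comp_injective {A : Ω → α} {f : α → β} (hf : Function.Injective f) :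
    ent μ (fun ω => f (A ω)) = ent μ A := by
  classical
  unfold ent
  calc ∑ b : β, negMulLog (μ ((fun ω => f (A ω)) ⁻¹' {b})).toReal
      = ∑ b ∈ Finset.univ.image f, negMulLog (μ ((fun ω => f (A ω)) ⁻¹' {b})).toReal := by
        refine (Finset.sum_subset (Finset.subset_univ _) ?_).symm
        intro b _ hb
        have he : (fun ω => f (A ω)) ⁻¹' {b} = ∅ := by
          ext ω
          simp only [Set.mem_preimage, Set.mem_singleton_iff, Set.mem_empty_iff_false, iff_false]
          intro h
          exact hb (Finset.mem_image.2 ⟨A ω, Finset.mem_univ _, h⟩)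
        simp [he]
    _ = ∑ a : α, negMulLog (μ ((fun ω => f (A ω)) ⁻¹' {f a})).toReal :=
        Finset.sum_image (fun x _ y _ h => hf h)
    _ = ∑ a : α, negMulLog (μ (A ⁻¹' {a})).toReal := by
        refine Finset.sum_congr rfl fun a _ => ?_
        have : (fun ω => f (A ω)) ⁻¹' {f a} = A ⁻¹' {a} := by
          ext ω; simp [hf.eq_iff]
        rw [this]

lemma ent_pair_fun {A : Ω → α} (f : α → β) :
    ent μ (fun ω => (A ω, f (A ω))) = ent μ A :=
  ent_comp_injective (f := fun a => (a, f a)) (fun _ _ h => congrArg Prod.fst h)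

lemma ent_eq_of_mutual {A : Ω → α} {B : Ω → β} (f : α → β) (g : β → α)
    (hf : ∀ ω, B ω = f (A ω)) (hg : ∀ ω, A ω = g (B ω)) : ent μ A = ent μ B := by
  have h1 : ent μ (fun ω => (A ω, B ω)) = ent μ A := by
    have : (fun ω => (A ω, B ω)) = (fun ω => (A ω, f (A ω))) := by
      funext ω; rw [hf ω]
    rw [this]; exact ent_pair_fun f
  have h2 : ent μ (fun ω => (B ω, A ω)) = ent μ B := by
    have : (fun ω => (B ω, A ω)) = (fun ω => (B ω, g (B ω))) := by
      funext ω; rw [hg ω]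
    rw [this]; exact ent_pair_fun g
  have h3 : ent μ (fun ω => (B ω, A ω)) = ent μ (fun ω => (A ω, B ω)) :=
    ent_comp_injective (A := fun ω => (A ω, B ω)) (f := fun p : α × β => (p.2, p.1))
      (fun p q h => by
        have h1' := congrArg Prod.fst h
        have h2' := congrArg Prod.snd h
        exact Prod.ext h2' h1')
  rw [← h1, ← h3, h2]

end Aux

section Aux2
variable {α β : Type*} [Fintype α] [Fintype β] {μ : Measure Ω}

/-- Gibbs-type inequality at the level of finite sums. -/
lemma sum_negMulLog_pair_le {P : α × β → ℝ} (hP0 : ∀ c, 0 ≤ P c)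
    (hPsum : ∑ c : α × β, P c = 1) :
    ∑ c : α × β, negMulLog (P c)
      ≤ (∑ a : α, negMulLog (∑ b : β, P (a, b)))
        + ∑ b : β, negMulLog (∑ a : α, P (a, b)) := by
  classical
  have hpa0 : ∀ a, 0 ≤ ∑ b : β, P (a, b) := fun a => Finset.sum_nonneg fun b _ => hP0 _
  have hpb0 : ∀ b, 0 ≤ ∑ a : α, P (a, b) := fun b => Finset.sum_nonneg fun a _ => hP0 _
  have hpasum : ∑ a : α, ∑ b : β, P (a, b) = 1 := by
    rw [← Fintype.sum_prod_type]; exact hPsum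
  have hpbsum : ∑ b : β, ∑ a : α, P (a, b) = 1 := by
    rw [Finset.sum_comm, ← Fintype.sum_prod_type]; exact hPsum
  have hA' : ∑ a : α, negMulLog (∑ b : β, P (a, b))
      = ∑ c : α × β, P c * (-Real.log (∑ b : β, P (c.1, b))) := by
    rw [Fintype.sum_prod_type]
    refine Finset.sum_congr rfl fun a _ => ?_
    dsimp only
    rw [← Finset.sum_mul, negMulLog]
    ring
  have hB' : ∑ b : β, negMulLog (∑ a : α, P (a, b))
      = ∑ c : α × β, P c * (-Real.log (∑ a : α, P (a, c.2))) := by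
    rw [Fintype.sum_prod_type, Finset.sum_comm]
    refine Finset.sum_congr rfl fun b _ => ?_
    dsimp only
    rw [← Finset.sum_mul, negMulLog]
    ring
  have key : ∑ c : α × β, P c * (Real.log (∑ b : β, P (c.1, b))
      + Real.log (∑ a : α, P (a, c.2)) - Real.log (P c)) ≤ 0 := by
    set s := Finset.univ.filter (fun c : α × β => P c ≠ 0) with hs
    have hzero : ∀ c ∈ (Finset.univ : Finset (α × β)), c ∉ s →
        P c * (Real.log (∑ b : β, P (c.1, b))
          + Real.log (∑ a : α, P (a, c.2)) - Real.log (P c)) = 0 := by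
      intro c _ hc
      have hc0 : P c = 0 := by simpa [hs] using hc
      simp [hc0]
    rw [← Finset.sum_subset (Finset.filter_subset _ _) hzero]
    have hq : ∑ c : α × β, (∑ b : β, P (c.1, b)) * (∑ a : α, P (a, c.2)) = 1 := by
      rw [Fintype.sum_prod_type]
      simp_rw [← Finset.mul_sum]
      rw [hpbsum]
      simpa using hpasum
    have hle : ∀ c ∈ s, P c * (Real.log (∑ b : β, P (c.1, b))
        + Real.log (∑ a : α, P (a, c.2)) - Real.log (P c))
        ≤ (∑ b : β, P (c.1, b)) * (∑ a : α, P (a, c.2)) - P c := by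
      intro c hc
      have hPc : 0 < P c := lt_of_le_of_ne (hP0 c) (Ne.symm (by simpa [hs] using hc))
      have hpac : 0 < ∑ b : β, P (c.1, b) := by
        refine lt_of_lt_of_le hPc ?_
        have := Finset.single_le_sum (f := fun b => P (c.1, b))
          (fun b _ => hP0 _) (Finset.mem_univ c.2)
        simpa using this
      have hpbc : 0 < ∑ a : α, P (a, c.2) := by
        refine lt_of_lt_of_le hPc ?_
        have := Finset.single_le_sum (f := fun a => P (a, c.2))
          (fun a _ => hP0 _) (Finset.mem_univ c.1)
        simpa using this
      have hlog : Real.log (∑ b : β, P (c.1, b)) + Real.log (∑ a : α, P (a, c.2))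
          - Real.log (P c)
          = Real.log ((∑ b : β, P (c.1, b)) * (∑ a : α, P (a, c.2)) / P c) := by
        rw [Real.log_div (by positivity) hPc.ne', Real.log_mul hpac.ne' hpbc.ne']
      rw [hlog]
      have hls := Real.log_le_sub_one_of_pos
        (show 0 < (∑ b : β, P (c.1, b)) * (∑ a : α, P (a, c.2)) / P c by positivity)
      calc P c * Real.log ((∑ b : β, P (c.1, b)) * (∑ a : α, P (a, c.2)) / P c)
          ≤ P c * ((∑ b : β, P (c.1, b)) * (∑ a : α, P (a, c.2)) / P c - 1) :=
            mul_le_mul_of_nonneg_left hls (hP0 c)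
        _ = (∑ b : β, P (c.1, b)) * (∑ a : α, P (a, c.2)) - P c := by
            field_simp
    calc ∑ c ∈ s, P c * (Real.log (∑ b : β, P (c.1, b))
          + Real.log (∑ a : α, P (a, c.2)) - Real.log (P c))
        ≤ ∑ c ∈ s, ((∑ b : β, P (c.1, b)) * (∑ a : α, P (a, c.2)) - P c) :=
          Finset.sum_le_sum hle
      _ = ∑ c ∈ s, (∑ b : β, P (c.1, b)) * (∑ a : α, P (a, c.2)) - ∑ c ∈ s, P c :=
          Finset.sum_sub_distrib _ _
      _ ≤ ∑ c : α × β, (∑ b : β, P (c.1, b)) * (∑ a : α, P (a, c.2)) - ∑ c : α × β, P c := by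
          have h1 : ∑ c ∈ s, (∑ b : β, P (c.1, b)) * (∑ a : α, P (a, c.2))
              ≤ ∑ c : α × β, (∑ b : β, P (c.1, b)) * (∑ a : α, P (a, c.2)) :=
            Finset.sum_le_sum_of_subset_of_nonneg (Finset.filter_subset _ _)
              (fun c _ _ => mul_nonneg (hpa0 _) (hpb0 _))
          have h2 : ∑ c ∈ s, P c = ∑ c : α × β, P c :=
            Finset.sum_subset (Finset.filter_subset _ _)
              (fun c _ hc => by simpa [hs] using hc)
          linarith
      _ ≤ 0 := by rw [hq, hPsum]; norm_num
  have hsplit : ∑ c : α × β, negMulLog (P c)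
      - ((∑ c : α × β, P c * (-Real.log (∑ b : β, P (c.1, b))))
        + ∑ c : α × β, P c * (-Real.log (∑ a : α, P (a, c.2))))
      = ∑ c : α × β, P c * (Real.log (∑ b : β, P (c.1, b))
        + Real.log (∑ a : α, P (a, c.2)) - Real.log (P c)) := by
    rw [← Finset.sum_add_distrib, ← Finset.sum_sub_distrib]
    refine Finset.sum_congr rfl fun c _ => ?_
    rw [negMulLog]
    ring
  linarith [key, hA', hB', hsplit]

/-- Subadditivity of entropy. -/
lemma ent_pair_le_add [IsProbabilityMeasure μ] {A : Ω → α} {B : Ω → β}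
    (h : DM (fun ω => (A ω, B ω))) :
    ent μ (fun ω => (A ω, B ω)) ≤ ent μ A + ent μ B := by
  have hkey := sum_negMulLog_pair_le
    (P := fun c : α × β => (μ ((fun ω => (A ω, B ω)) ⁻¹' {c})).toReal)
    (fun c => ENNReal.toReal_nonneg) (sum_meas_eq_one h)
  have hA : ent μ A = ∑ a : α, negMulLog
      (∑ b : β, (μ ((fun ω => (A ω, B ω)) ⁻¹' {(a, b)})).toReal) := by
    unfold ent
    exact Finset.sum_congr rfl fun a _ => by rw [meas_fst h a]
  have hB : ent μ B = ∑ b : β, negMulLog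
      (∑ a : α, (μ ((fun ω => (A ω, B ω)) ⁻¹' {(a, b)})).toReal) := by
    unfold ent
    exact Finset.sum_congr rfl fun b _ => by rw [meas_snd h b]
  rw [hA, hB]
  exact hkey

/-- Entropy of an independent pair is the sum. -/
lemma ent_pair_of_indep [MeasurableSpace α] [MeasurableSingletonClass α]
    [MeasurableSpace β] [MeasurableSingletonClass β] [IsProbabilityMeasure μ]
    {A : Ω → α} {B : Ω → β} (hA : Measurable A) (hB : Measurable B)
    (hind : ProbabilityTheory.IndepFun A B μ) :
    ent μ (fun ω => (A ω, B ω)) = ent μ A + ent μ B := by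
  have hsA : ∑ a : α, (μ (A ⁻¹' {a})).toReal = 1 :=
    sum_meas_eq_one (fun s => hA s.toFinite.measurableSet)
  have hsB : ∑ b : β, (μ (B ⁻¹' {b})).toReal = 1 :=
    sum_meas_eq_one (fun s => hB s.toFinite.measurableSet)
  have hprod : ∀ a b, (μ ((fun ω => (A ω, B ω)) ⁻¹' {(a, b)})).toReal
      = (μ (A ⁻¹' {a})).toReal * (μ (B ⁻¹' {b})).toReal := by
    intro a b
    have hset : (fun ω => (A ω, B ω)) ⁻¹' {(a, b)} = A ⁻¹' {a} ∩ B ⁻¹' {b} := by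
      ext ω; simp [Prod.ext_iff]
    rw [hset, hind.measure_inter_preimage_eq_mul {a} {b}
      (measurableSet_singleton a) (measurableSet_singleton b), ENNReal.toReal_mul]
  unfold ent
  rw [Fintype.sum_prod_type]
  calc ∑ a : α, ∑ b : β, negMulLog (μ ((fun ω => (A ω, B ω)) ⁻¹' {(a, b)})).toReal
      = ∑ a : α, ∑ b : β, ((μ (B ⁻¹' {b})).toReal * negMulLog (μ (A ⁻¹' {a})).toReal
          + (μ (A ⁻¹' {a})).toReal * negMulLog (μ (B ⁻¹' {b})).toReal) := by
        refine Finset.sum_congr rfl fun a _ => Finset.sum_congr rfl fun b _ => ?_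
        rw [hprod, negMulLog_mul]
    _ = ∑ a : α, negMulLog (μ (A ⁻¹' {a})).toReal
        + ∑ b : β, negMulLog (μ (B ⁻¹' {b})).toReal := by
        have hinner : ∀ a : α, ∑ b : β, ((μ (B ⁻¹' {b})).toReal * negMulLog (μ (A ⁻¹' {a})).toReal
            + (μ (A ⁻¹' {a})).toReal * negMulLog (μ (B ⁻¹' {b})).toReal)
            = negMulLog (μ (A ⁻¹' {a})).toReal
              + (μ (A ⁻¹' {a})).toReal * ∑ b : β, negMulLog (μ (B ⁻¹' {b})).toReal := by
          intro a
          rw [Finset.sum_add_distrib, ← Finset.sum_mul, hsB, one_mul, ← Finset.mul_sum]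
        rw [Finset.sum_congr rfl (fun a _ => hinner a), Finset.sum_add_distrib,
          ← Finset.sum_mul, hsA, one_mul]

end Aux2

variable {n : ℕ} {𝒳 : Fin n → Type*} {𝒴 : Finset (Fin n) → Type*}

private def recon (V : Finset (Fin n))
    (p : (∀ i : V, 𝒳 i.1) × (∀ i : (Vᶜ : Finset (Fin n)), 𝒳 i.1)) (i : Fin n) : 𝒳 i :=
  if h : i ∈ V then p.1 ⟨i, h⟩ else p.2 ⟨i, Finset.mem_compl.mpr h⟩

private def reconY (φ : ∀ J : Finset (Fin n), (∀ j : J, 𝒳 j.1) → 𝒴 J) (V : Finset (Fin n))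
    (p : (∀ J : {J : Finset (Fin n) // J.Nonempty ∧ (J ∩ V).Nonempty}, 𝒴 J.1)
      × (∀ i : (Vᶜ : Finset (Fin n)), 𝒳 i.1))
    (J : {J : Finset (Fin n) // J.Nonempty}) : 𝒴 J.1 :=
  if h : (J.1 ∩ V).Nonempty then p.1 ⟨J.1, ⟨J.2, h⟩⟩
  else φ J.1 (fun j => p.2 ⟨j.1, Finset.mem_compl.mpr
    (fun hj => h ⟨j.1, Finset.mem_inter.mpr ⟨j.2, hj⟩⟩)⟩)

private def reconC (U V : Finset (Fin n))
    (p : (∀ i : U, 𝒳 i.1) × (∀ i : (Vᶜ \ U : Finset (Fin n)), 𝒳 i.1))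
    (i : (Vᶜ : Finset (Fin n))) : 𝒳 i.1 :=
  if h : i.1 ∈ U then p.1 ⟨i.1, h⟩ else p.2 ⟨i.1, Finset.mem_sdiff.mpr ⟨i.2, h⟩⟩

/-- If `X_1, …, X_n` are mutually independent, `U, V` are disjoint, `U ⊆ V̄`, and
`H[X_V | Y_N, X_{V̄}] = 0`, then with `P = {J ∈ N : J ∩ V ≠ ∅}` one has
`H[X_V] ≤ H[Y_P | X_U]`. -/
theorem ent_le_cond_ent_outputs
    [∀ i, Fintype (𝒳 i)] [∀ i, Nonempty (𝒳 i)]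
    [∀ i, MeasurableSpace (𝒳 i)] [∀ i, DiscreteMeasurableSpace (𝒳 i)]
    [∀ J, Fintype (𝒴 J)]
    (μ : Measure Ω) [IsProbabilityMeasure μ]
    (X : ∀ i, Ω → 𝒳 i) (hXmeas : ∀ i, Measurable (X i))
    (hindep : ProbabilityTheory.iIndepFun X μ)
    (φ : ∀ J : Finset (Fin n), (∀ j : J, 𝒳 j.1) → 𝒴 J)
    (U V : Finset (Fin n)) (hUV : Disjoint U V) (hUVc : U ⊆ Vᶜ)
    (hdec : cent μ (subtuple X V)
      (fun ω => (outputs φ X (fun J => J.Nonempty) ω, subtuple X Vᶜ ω)) = 0) :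
    ent μ (subtuple X V)
      ≤ cent μ (outputs φ X (fun J => J.Nonempty ∧ (J ∩ V).Nonempty))
          (subtuple X U) := by
  classical
  have hW : Measurable (fun ω (i : Fin n) => X i ω) := measurable_pi_lambda _ hXmeas
  have hXCrec : ∀ ω, subtuple X Vᶜ ω
      = reconC U V (subtuple X U ω, subtuple X (Vᶜ \ U) ω) := by
    intro ω
    funext i
    unfold reconC
    split <;> rfl
  have e1 : ent μ (fun ω => (subtuple X V ω,
        (outputs φ X (fun J => J.Nonempty) ω, subtuple X Vᶜ ω)))
      = ent μ (fun ω => (outputs φ X (fun J => J.Nonempty) ω, subtuple X Vᶜ ω)) := by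
    unfold cent at hdec
    exact sub_eq_zero.mp hdec
  have e2 : ent μ (fun ω => (subtuple X V ω, subtuple X Vᶜ ω))
      = ent μ (fun ω => (subtuple X V ω,
          (outputs φ X (fun J => J.Nonempty) ω, subtuple X Vᶜ ω))) := by
    refine ent_eq_of_mutual
      (f := fun p => (p.1, (fun J : {J : Finset (Fin n) // J.Nonempty} =>
        φ J.1 (fun j => recon V p j.1), p.2)))
      (g := fun q => (q.1, q.2.2)) ?_ ?_
    · intro ω
      refine Prod.ext rfl (Prod.ext ?_ rfl)
      funext J
      show φ J.1 (fun j => X j.1 ω)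
        = φ J.1 (fun j => recon V (subtuple X V ω, subtuple X Vᶜ ω) j.1)
      congr 1
      funext j
      unfold recon
      split <;> rfl
    · intro ω
      rfl
  have e3 : ent μ (fun ω => (outputs φ X (fun J => J.Nonempty) ω, subtuple X Vᶜ ω))
      = ent μ (fun ω => (outputs φ X (fun J => J.Nonempty ∧ (J ∩ V).Nonempty) ω,
          subtuple X Vᶜ ω)) := by
    refine ent_eq_of_mutual
      (f := fun p => ((fun J : {J : Finset (Fin n) // J.Nonempty ∧ (J ∩ V).Nonempty} =>
        p.1 ⟨J.1, J.2.1⟩), p.2))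
      (g := fun q => (reconY φ V q, q.2)) ?_ ?_
    · intro ω
      rfl
    · intro ω
      refine Prod.ext ?_ rfl
      funext J
      show φ J.1 (fun j => X j.1 ω) = reconY φ V
        (outputs φ X (fun J => J.Nonempty ∧ (J ∩ V).Nonempty) ω, subtuple X Vᶜ ω) J
      unfold reconY
      split <;> rfl
  have e4 : ent μ (fun ω => (subtuple X V ω, subtuple X Vᶜ ω))
      = ent μ (subtuple X V) + ent μ (subtuple X Vᶜ) :=
    ent_pair_of_indep (measurable_pi_lambda _ (fun i => hXmeas i.1))
      (measurable_pi_lambda _ (fun i => hXmeas i.1))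
      (hindep.indepFun_finset V Vᶜ disjoint_compl_right hXmeas)
  have e5 : ent μ (subtuple X Vᶜ)
      = ent μ (fun ω => (subtuple X U ω, subtuple X (Vᶜ \ U) ω)) := by
    refine ent_eq_of_mutual
      (f := fun c => ((fun i : U => c ⟨i.1, hUVc i.2⟩),
        (fun i : (Vᶜ \ U : Finset (Fin n)) => c ⟨i.1, (Finset.mem_sdiff.mp i.2).1⟩)))
      (g := fun q => reconC U V q) ?_ ?_
    · intro ω
      rfl
    · intro ω
      exact hXCrec ω
  have e6 : ent μ (fun ω => (subtuple X U ω, subtuple X (Vᶜ \ U) ω))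
      = ent μ (subtuple X U) + ent μ (subtuple X (Vᶜ \ U)) :=
    ent_pair_of_indep (measurable_pi_lambda _ (fun i => hXmeas i.1))
      (measurable_pi_lambda _ (fun i => hXmeas i.1))
      (hindep.indepFun_finset U (Vᶜ \ U) disjoint_sdiff_self_right hXmeas)
  have e7 : ent μ (fun ω => (outputs φ X (fun J => J.Nonempty ∧ (J ∩ V).Nonempty) ω,
        subtuple X Vᶜ ω))
      = ent μ (fun ω => ((outputs φ X (fun J => J.Nonempty ∧ (J ∩ V).Nonempty) ω,
          subtuple X U ω), subtuple X (Vᶜ \ U) ω)) := by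
    refine ent_eq_of_mutual
      (f := fun p => ((p.1, fun i : U => p.2 ⟨i.1, hUVc i.2⟩),
        (fun i : (Vᶜ \ U : Finset (Fin n)) => p.2 ⟨i.1, (Finset.mem_sdiff.mp i.2).1⟩)))
      (g := fun q => (q.1.1, reconC U V (q.1.2, q.2))) ?_ ?_
    · intro ω
      rfl
    · intro ω
      refine Prod.ext rfl ?_
      exact hXCrec ω
  have e8 : ent μ (fun ω => ((outputs φ X (fun J => J.Nonempty ∧ (J ∩ V).Nonempty) ω,
        subtuple X U ω), subtuple X (Vᶜ \ U) ω))
      ≤ ent μ (fun ω => (outputs φ X (fun J => J.Nonempty ∧ (J ∩ V).Nonempty) ω,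
          subtuple X U ω)) + ent μ (subtuple X (Vᶜ \ U)) :=
    ent_pair_le_add (dm_comp hW (fun x =>
      (((fun J : {J : Finset (Fin n) // J.Nonempty ∧ (J ∩ V).Nonempty} =>
          φ J.1 (fun j => x j.1)), (fun i : U => x i.1)),
        (fun i : (Vᶜ \ U : Finset (Fin n)) => x i.1))))
  have goal' : ent μ (subtuple X V) + ent μ (subtuple X U)
      ≤ ent μ (fun ω => (outputs φ X (fun J => J.Nonempty ∧ (J ∩ V).Nonempty) ω,
          subtuple X U ω)) := by
    linarith [e1, e2, e3, e4, e5, e6, e7, e8]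
  unfold cent
  exact le_sub_iff_add_le.mpr goal'


end DistIndexCoding
end

section
/- Suppose the random variables X_1, …, X_n are mutually independent, U, V ⊆ [n] are disjoint, H[X_U | Y_N] = 0, H[X_{[n]∖(U∪V)} | Y_N, X_{U∪V}] = 0, and H[X_V | Y_N, X_{V̄}] = 0. Let Q = {J ∈ N : J ∩ V ≠ ∅ and J ⊄ U ∪ V}. Then H[X_{[n]}] ≤ H[Y_N] + H[Y_Q | X_{U∪V}]. (Entropy form of Theorem 2.) -/
/-!
Setup for the distributed index coding problem: `n` messages `X i` (finitely valued
random variables on a probability space `(Ω, μ)`), one server for each nonempty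
subset `J` of `Fin n`, whose output `Y_J = φ_J (X_J)` is a deterministic function of
the messages indexed by `J`.  Shannon entropy `ent`, conditional entropy `cent` and
conditional mutual information `cmi` are defined from scratch.
-/

set_option maxHeartbeats 1000000

open MeasureTheory Real

namespace DistIndexCoding

variable {Ω : Type*} [MeasurableSpace Ω]

variable {n : ℕ} {𝒳 : Fin n → Type*} {𝒴 : Finset (Fin n) → Type*}

section AbstractEntropy

attribute [local instance 2000] Classical.propDecidable

variable {α : Type*} [Fintype α]

/-- The total `p`-mass of the fiber of `f` over `b`. -/
noncomputable def fibsum {β : Type*} (p : α → ℝ) (f : α → β) (b : β) : ℝ :=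
  ∑ a ∈ Finset.univ.filter (fun a => f a = b), p a

/-- Entropy of the "pushforward" of the weight function `p` along `f`. -/
noncomputable def Hf {β : Type*} [Fintype β] (p : α → ℝ) (f : α → β) : ℝ :=
  ∑ b : β, negMulLog (fibsum p f b)

/-- Conditional entropy at the level of weight functions. -/
noncomputable def Cf {β γ : Type*} [Fintype β] [Fintype γ] (p : α → ℝ) (f : α → β)
    (g : α → γ) : ℝ :=
  Hf p (fun a => (f a, g a)) - Hf p g

variable {p : α → ℝ}

lemma fibsum_nonneg (hp : ∀ a, 0 ≤ p a) {β : Type*} (f : α → β) (b : β) :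
    0 ≤ fibsum p f b :=
  Finset.sum_nonneg fun a _ => hp a

lemma fibsum_comp {β γ : Type*} [Fintype β] (f : α → β) (k : β → γ) (c : γ) :
    fibsum p (fun a => k (f a)) c
      = ∑ b ∈ Finset.univ.filter (fun b => k b = c), fibsum p f b := by
  rw [Finset.sum_filter]
  have h1 : ∀ b : β,
      (if k b = c then fibsum p f b else 0)
        = ∑ a ∈ Finset.univ.filter (fun a => f a = b),
            (if k (f a) = c then p a else 0) := by
    intro b
    unfold fibsum
    split_ifs with h
    · refine Finset.sum_congr rfl fun a ha => ?_
      rw [if_pos]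
      rw [(Finset.mem_filter.1 ha).2]; exact h
    · refine (Finset.sum_eq_zero fun a ha => ?_).symm
      rw [if_neg]
      rw [(Finset.mem_filter.1 ha).2]; exact h
  rw [Finset.sum_congr rfl fun b _ => h1 b]
  have h2 : ∑ b : β, ∑ a ∈ Finset.univ.filter (fun a => f a = b),
      (if k (f a) = c then p a else 0) = ∑ a, (if k (f a) = c then p a else 0) :=
    Finset.sum_fiberwise _ _ _
  rw [h2]
  unfold fibsum
  rw [Finset.sum_filter]

lemma fibsum_total {β : Type*} [Fintype β] (f : α → β) :
    ∑ b : β, fibsum p f b = ∑ a, p a :=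
  Finset.sum_fiberwise _ _ _

lemma Hf_comp_inj {β γ : Type*} [Fintype β] [Fintype γ] (f : α → β) (e : β → γ)
    (he : Function.Injective e) :
    Hf p (fun a => e (f a)) = Hf p f := by
  unfold Hf
  have h0 : ∀ c ∈ Finset.univ, c ∉ Finset.univ.image e →
      negMulLog (fibsum p (fun a => e (f a)) c) = 0 := by
    intro c _ hc
    have hemp : Finset.univ.filter (fun a => e (f a) = c) = ∅ := by
      ext a
      simp only [Finset.mem_filter, Finset.mem_univ, true_and, Finset.notMem_empty,
        iff_false]
      intro h
      exact hc (Finset.mem_image.2 ⟨f a, Finset.mem_univ _, h⟩)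
    unfold fibsum
    rw [hemp, Finset.sum_empty, negMulLog_zero]
  rw [← Finset.sum_subset (Finset.subset_univ (Finset.univ.image e)) h0,
    Finset.sum_image (fun x _ y _ h => he h)]
  refine Finset.sum_congr rfl fun b _ => ?_
  congr 1
  unfold fibsum
  refine Finset.sum_congr ?_ fun _ _ => rfl
  ext a
  simp [he.eq_iff]

lemma Hf_pair_det {β γ : Type*} [Fintype β] [Fintype γ] (f : α → β) (g : α → γ) (k : β → γ)
    (hk : ∀ a, g a = k (f a)) :
    Hf p (fun a => (f a, g a)) = Hf p f := by
  have h : (fun a => (f a, g a)) = (fun a => ((fun b => (b, k b)) (f a))) := by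
    funext a; rw [hk a]
  rw [h]
  exact Hf_comp_inj f (fun b => (b, k b)) (fun x y hxy => by
    simpa using congrArg Prod.fst hxy)

lemma Hf_comm {β γ : Type*} [Fintype β] [Fintype γ] (f : α → β) (g : α → γ) :
    Hf p (fun a => (f a, g a)) = Hf p (fun a => (g a, f a)) := by
  have h := Hf_comp_inj (p := p) (fun a => (f a, g a)) Prod.swap Prod.swap_injective
  have h2 : (fun a => Prod.swap (f a, g a)) = (fun a => (g a, f a)) := rfl
  rw [h2] at h
  exact h.symm

lemma Hf_assoc {β γ δ : Type*} [Fintype β] [Fintype γ] [Fintype δ]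
    (f : α → β) (g : α → γ) (h : α → δ) :
    Hf p (fun a => (f a, (g a, h a))) = Hf p (fun a => ((f a, g a), h a)) := by
  have h2 := Hf_comp_inj (p := p) (fun a => ((f a, g a), h a)) (Equiv.prodAssoc β γ δ)
    (Equiv.injective _)
  have h3 : (fun a => (Equiv.prodAssoc β γ δ) ((f a, g a), h a))
      = (fun a => (f a, (g a, h a))) := rfl
  rw [h3] at h2
  exact h2

lemma Hf_det_congr {β γ : Type*} [Fintype β] [Fintype γ] (f : α → β) (g : α → γ)
    (k : β → γ) (l : γ → β) (hk : ∀ a, g a = k (f a)) (hl : ∀ a, f a = l (g a)) :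
    Hf p f = Hf p g := by
  rw [← Hf_pair_det f g k hk, Hf_comm, Hf_pair_det g f l hl]

lemma negMulLog_sum_le {β : Type*} (s : Finset β) (x : β → ℝ) (hx : ∀ b ∈ s, 0 ≤ x b) :
    negMulLog (∑ b ∈ s, x b) ≤ ∑ b ∈ s, negMulLog (x b) := by
  have h1 : negMulLog (∑ b ∈ s, x b) = ∑ b ∈ s, x b * (-Real.log (∑ c ∈ s, x c)) := by
    rw [negMulLog, ← Finset.sum_mul]; ring
  rw [h1]
  refine Finset.sum_le_sum fun b hb => ?_
  rcases eq_or_lt_of_le (hx b hb) with h0 | h0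
  · rw [← h0]; simp
  · rw [negMulLog]
    have hlog : Real.log (x b) ≤ Real.log (∑ c ∈ s, x c) :=
      Real.log_le_log h0 (Finset.single_le_sum hx hb)
    nlinarith [hlog, h0]

lemma Hf_mono {β γ : Type*} [Fintype β] [Fintype γ] (hp : ∀ a, 0 ≤ p a)
    (f : α → β) (k : β → γ) :
    Hf p (fun a => k (f a)) ≤ Hf p f := by
  unfold Hf
  calc ∑ c : γ, negMulLog (fibsum p (fun a => k (f a)) c)
      ≤ ∑ c : γ, ∑ b ∈ Finset.univ.filter (fun b => k b = c), negMulLog (fibsum p f b) := by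
        refine Finset.sum_le_sum fun c _ => ?_
        rw [fibsum_comp]
        exact negMulLog_sum_le _ _ fun b _ => fibsum_nonneg hp f b
    _ = ∑ b : β, negMulLog (fibsum p f b) := Finset.sum_fiberwise _ _ _

lemma Hf_mono' {β γ : Type*} [Fintype β] [Fintype γ] (hp : ∀ a, 0 ≤ p a)
    {f : α → β} {g : α → γ} (k : β → γ) (hk : ∀ a, g a = k (f a)) :
    Hf p g ≤ Hf p f := by
  have h : g = fun a => k (f a) := funext hk
  rw [h]
  exact Hf_mono hp f k

lemma key_ineq {q B C A : ℝ} (hq : 0 ≤ q) (hB : q ≤ B) (hC : q ≤ C) (hA : q ≤ A) :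
    q * (-Real.log q) + q * (-Real.log A)
      ≤ q * (-Real.log B) + q * (-Real.log C) + (B * C / A - q) := by
  rcases eq_or_lt_of_le hq with h0 | h0
  · rw [← h0]
    have hB0 : 0 ≤ B := le_trans hq hB
    have hC0 : 0 ≤ C := le_trans hq hC
    have hA0 : 0 ≤ A := le_trans hq hA
    have : 0 ≤ B * C / A := div_nonneg (mul_nonneg hB0 hC0) hA0
    simp only [zero_mul, zero_add, zero_sub]
    linarith
  · have hBpos : 0 < B := lt_of_lt_of_le h0 hB
    have hCpos : 0 < C := lt_of_lt_of_le h0 hC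
    have hApos : 0 < A := lt_of_lt_of_le h0 hA
    have hlog : Real.log (B * C / (q * A)) ≤ B * C / (q * A) - 1 :=
      Real.log_le_sub_one_of_pos (by positivity)
    have hexp : Real.log (B * C / (q * A))
        = Real.log B + Real.log C - Real.log q - Real.log A := by
      rw [Real.log_div (by positivity) (by positivity), Real.log_mul (ne_of_gt hBpos)
        (ne_of_gt hCpos), Real.log_mul (ne_of_gt h0) (ne_of_gt hApos)]
      ring
    have h2 : q * (Real.log B + Real.log C - Real.log q - Real.log A)
        ≤ q * (B * C / (q * A) - 1) := by
      rw [← hexp]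
      exact mul_le_mul_of_nonneg_left hlog hq
    have h3 : q * (B * C / (q * A) - 1) = B * C / A - q := by
      rw [mul_sub, mul_one, ← mul_div_assoc, mul_comm q (B * C), mul_comm q A,
        mul_div_mul_right _ _ (ne_of_gt h0)]
    nlinarith [h2, h3]

lemma sum_rot {β γ δ : Type*} [Fintype β] [Fintype γ] [Fintype δ] (f : β → γ → δ → ℝ) :
    ∑ b, ∑ c, ∑ d, f b c d = ∑ d, ∑ b, ∑ c, f b c d := by
  have h1 : ∀ b, ∑ c, ∑ d, f b c d = ∑ d, ∑ c, f b c d := fun b => Finset.sum_comm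
  rw [Finset.sum_congr rfl fun b _ => h1 b]
  exact Finset.sum_comm

lemma entropy_submod_core {β γ δ : Type*} [Fintype β] [Fintype γ] [Fintype δ]
    (q : β → γ → δ → ℝ) (hq : ∀ b c d, 0 ≤ q b c d) :
    ((∑ b, ∑ c, ∑ d, negMulLog (q b c d)) + ∑ d, negMulLog (∑ b, ∑ c, q b c d))
      ≤ (∑ b, ∑ d, negMulLog (∑ c, q b c d)) + ∑ c, ∑ d, negMulLog (∑ b, q b c d) := by
  set A : δ → ℝ := fun d => ∑ b, ∑ c, q b c d with hAdef
  set B : β → δ → ℝ := fun b d => ∑ c, q b c d with hBdef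
  set C : γ → δ → ℝ := fun c d => ∑ b, q b c d with hCdef
  have hB0 : ∀ b d, 0 ≤ B b d := fun b d => Finset.sum_nonneg fun c _ => hq b c d
  have hC0 : ∀ c d, 0 ≤ C c d := fun c d => Finset.sum_nonneg fun b _ => hq b c d
  have hA0 : ∀ d, 0 ≤ A d := fun d =>
    Finset.sum_nonneg fun b _ => Finset.sum_nonneg fun c _ => hq b c d
  have hqB : ∀ b c d, q b c d ≤ B b d := fun b c d =>
    Finset.single_le_sum (fun c' _ => hq b c' d) (Finset.mem_univ c)
  have hqC : ∀ b c d, q b c d ≤ C c d := fun b c d =>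
    Finset.single_le_sum (fun b' _ => hq b' c d) (Finset.mem_univ b)
  have hqA : ∀ b c d, q b c d ≤ A d := fun b c d =>
    le_trans (hqB b c d) (Finset.single_le_sum (fun b' _ => hB0 b' d) (Finset.mem_univ b))
  have e0 : ∑ b, ∑ c, ∑ d, negMulLog (q b c d)
      = ∑ b, ∑ c, ∑ d, q b c d * (-Real.log (q b c d)) := by
    refine Finset.sum_congr rfl fun b _ => Finset.sum_congr rfl fun c _ =>
      Finset.sum_congr rfl fun d _ => ?_
    rw [negMulLog]; ring
  have eA : ∑ d, negMulLog (A d) = ∑ b, ∑ c, ∑ d, q b c d * (-Real.log (A d)) := by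
    have h1 : ∀ d, negMulLog (A d) = ∑ b, ∑ c, q b c d * (-Real.log (A d)) := by
      intro d
      rw [negMulLog, show -A d * Real.log (A d) = A d * (-Real.log (A d)) by ring, hAdef]
      simp only [Finset.sum_mul]
    rw [Finset.sum_congr rfl fun d _ => h1 d]
    exact (sum_rot _).symm
  have eB : ∑ b, ∑ d, negMulLog (B b d)
      = ∑ b, ∑ c, ∑ d, q b c d * (-Real.log (B b d)) := by
    refine Finset.sum_congr rfl fun b _ => ?_
    have h1 : ∀ d, negMulLog (B b d) = ∑ c, q b c d * (-Real.log (B b d)) := by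
      intro d
      rw [negMulLog, show -B b d * Real.log (B b d) = B b d * (-Real.log (B b d)) by ring,
        hBdef]
      simp only [Finset.sum_mul]
    rw [Finset.sum_congr rfl fun d _ => h1 d]
    exact Finset.sum_comm
  have eC : ∑ c, ∑ d, negMulLog (C c d)
      = ∑ b, ∑ c, ∑ d, q b c d * (-Real.log (C c d)) := by
    have h1 : ∀ c d, negMulLog (C c d) = ∑ b, q b c d * (-Real.log (C c d)) := by
      intro c d
      rw [negMulLog, show -C c d * Real.log (C c d) = C c d * (-Real.log (C c d)) by ring,
        hCdef]
      simp only [Finset.sum_mul]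
    rw [Finset.sum_congr rfl fun c _ => Finset.sum_congr rfl fun d _ => h1 c d]
    exact sum_rot _
  rw [e0, eA, eB, eC]
  have hsum : ∑ b, ∑ c, ∑ d, (B b d * C c d / A d - q b c d) = 0 := by
    have h1 : ∑ b, ∑ c, ∑ d, B b d * C c d / A d = ∑ d, A d := by
      rw [sum_rot]
      refine Finset.sum_congr rfl fun d _ => ?_
      have hh : (∑ b, B b d) * (∑ c, C c d) = ∑ b, ∑ c, B b d * C c d :=
        Finset.sum_mul_sum _ _ _ _
      have hdiv : ∑ b, ∑ c, B b d * C c d / A d = (∑ b, B b d) * (∑ c, C c d) / A d := by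
        rw [hh, Finset.sum_div]
        exact Finset.sum_congr rfl fun b _ => by rw [Finset.sum_div]
      have h3 : ∑ b, B b d = A d := by simp only [hBdef, hAdef]
      have h4 : ∑ c, C c d = A d := by
        simp only [hCdef, hAdef]
        exact Finset.sum_comm
      rw [hdiv, h3, h4]
      rcases eq_or_lt_of_le (hA0 d) with h5 | h5
      · rw [← h5]; simp
      · field_simp
    have h2 : ∑ b, ∑ c, ∑ d, q b c d = ∑ d, A d := by
      rw [sum_rot]
    simp only [Finset.sum_sub_distrib]
    rw [h1, h2]
    ring
  have hmain : ∑ b, ∑ c, ∑ d, (q b c d * (-Real.log (q b c d)) + q b c d * (-Real.log (A d)))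
      ≤ ∑ b, ∑ c, ∑ d, (q b c d * (-Real.log (B b d)) + q b c d * (-Real.log (C c d))
        + (B b d * C c d / A d - q b c d)) :=
    Finset.sum_le_sum fun b _ => Finset.sum_le_sum fun c _ =>
      Finset.sum_le_sum fun d _ =>
        key_ineq (hq b c d) (hqB b c d) (hqC b c d) (hqA b c d)
  simp only [Finset.sum_add_distrib] at hmain
  rw [hsum] at hmain
  linarith

lemma fibsum_pair_snd {β γ : Type*} [Fintype β] (F : α → β) (G : α → γ) (c : γ) :
    fibsum p G c = ∑ b : β, fibsum p (fun a => (F a, G a)) (b, c) := by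
  have hfib : ∀ b, Finset.univ.filter (fun a => (F a, G a) = (b, c))
      = (Finset.univ.filter (fun a => G a = c)).filter (fun a => F a = b) := by
    intro b
    ext a
    simp only [Finset.mem_filter, Finset.mem_univ, true_and, Prod.mk.injEq]
    tauto
  unfold fibsum
  beta_reduce
  rw [Finset.sum_congr rfl fun b (_ : b ∈ Finset.univ) => by rw [hfib b]]
  exact (Finset.sum_fiberwise (Finset.univ.filter (fun a => G a = c)) F p).symm

lemma fibsum_tr1 {β γ δ : Type*} [Fintype γ] (f : α → β) (g : α → γ) (h : α → δ)
    (b : β) (d : δ) :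
    fibsum p (fun a => (f a, h a)) (b, d)
      = ∑ c : γ, fibsum p (fun a => ((f a, g a), h a)) ((b, c), d) := by
  have hfib : ∀ c, Finset.univ.filter (fun a => ((f a, g a), h a) = ((b, c), d))
      = (Finset.univ.filter (fun a => (f a, h a) = (b, d))).filter (fun a => g a = c) := by
    intro c
    ext a
    simp only [Finset.mem_filter, Finset.mem_univ, true_and, Prod.mk.injEq]
    tauto
  unfold fibsum
  beta_reduce
  rw [Finset.sum_congr rfl fun c (_ : c ∈ Finset.univ) => by rw [hfib c]]
  exact (Finset.sum_fiberwise (Finset.univ.filter (fun a => (f a, h a) = (b, d))) g p).symm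

lemma fibsum_tr2 {β γ δ : Type*} [Fintype β] (f : α → β) (g : α → γ) (h : α → δ)
    (c : γ) (d : δ) :
    fibsum p (fun a => (g a, h a)) (c, d)
      = ∑ b : β, fibsum p (fun a => ((f a, g a), h a)) ((b, c), d) := by
  have hfib : ∀ b, Finset.univ.filter (fun a => ((f a, g a), h a) = ((b, c), d))
      = (Finset.univ.filter (fun a => (g a, h a) = (c, d))).filter (fun a => f a = b) := by
    intro b
    ext a
    simp only [Finset.mem_filter, Finset.mem_univ, true_and, Prod.mk.injEq]
    tauto
  unfold fibsum
  beta_reduce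
  rw [Finset.sum_congr rfl fun b (_ : b ∈ Finset.univ) => by rw [hfib b]]
  exact (Finset.sum_fiberwise (Finset.univ.filter (fun a => (g a, h a) = (c, d))) f p).symm

lemma fibsum_tr3 {β γ δ : Type*} [Fintype β] [Fintype γ] (f : α → β) (g : α → γ) (h : α → δ)
    (d : δ) :
    fibsum p h d = ∑ b : β, ∑ c : γ, fibsum p (fun a => ((f a, g a), h a)) ((b, c), d) := by
  rw [fibsum_pair_snd (fun a => (f a, g a)) h d]
  exact Fintype.sum_prod_type
    (f := fun x : β × γ => fibsum p (fun a => ((f a, g a), h a)) (x, d))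

lemma Hf_submod {β γ δ : Type*} [Fintype β] [Fintype γ] [Fintype δ] (hp : ∀ a, 0 ≤ p a)
    (f : α → β) (g : α → γ) (h : α → δ) :
    Hf p (fun a => ((f a, g a), h a)) + Hf p h
      ≤ Hf p (fun a => (f a, h a)) + Hf p (fun a => (g a, h a)) := by
  have core := entropy_submod_core
    (fun b c d => fibsum p (fun a => ((f a, g a), h a)) ((b, c), d))
    (fun b c d => fibsum_nonneg hp _ _)
  have e1 : Hf p (fun a => ((f a, g a), h a))
      = ∑ b, ∑ c, ∑ d, negMulLog (fibsum p (fun a => ((f a, g a), h a)) ((b, c), d)) := by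
    have step1 : ∑ x : (β × γ) × δ, negMulLog (fibsum p (fun a => ((f a, g a), h a)) x)
        = ∑ y : β × γ, ∑ d, negMulLog (fibsum p (fun a => ((f a, g a), h a)) (y, d)) :=
      Fintype.sum_prod_type
        (f := fun x : (β × γ) × δ => negMulLog (fibsum p (fun a => ((f a, g a), h a)) x))
    have step2 : ∑ y : β × γ, ∑ d, negMulLog (fibsum p (fun a => ((f a, g a), h a)) (y, d))
        = ∑ b, ∑ c, ∑ d, negMulLog (fibsum p (fun a => ((f a, g a), h a)) ((b, c), d)) :=
      Fintype.sum_prod_type (f := fun y : β × γ =>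
        ∑ d, negMulLog (fibsum p (fun a => ((f a, g a), h a)) (y, d)))
    exact step1.trans step2
  have e2 : Hf p h = ∑ d, negMulLog (∑ b, ∑ c,
      fibsum p (fun a => ((f a, g a), h a)) ((b, c), d)) := by
    unfold Hf
    exact Finset.sum_congr rfl fun d _ => by rw [← fibsum_tr3 f g h d]
  have e3 : Hf p (fun a => (f a, h a)) = ∑ b, ∑ d, negMulLog (∑ c,
      fibsum p (fun a => ((f a, g a), h a)) ((b, c), d)) := by
    have step1 : ∑ x : β × δ, negMulLog (fibsum p (fun a => (f a, h a)) x)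
        = ∑ b, ∑ d, negMulLog (fibsum p (fun a => (f a, h a)) (b, d)) :=
      Fintype.sum_prod_type (f := fun x : β × δ => negMulLog (fibsum p (fun a => (f a, h a)) x))
    refine step1.trans ?_
    exact Finset.sum_congr rfl fun b _ => Finset.sum_congr rfl fun d _ => by
      rw [← fibsum_tr1 f g h b d]
  have e4 : Hf p (fun a => (g a, h a)) = ∑ c, ∑ d, negMulLog (∑ b,
      fibsum p (fun a => ((f a, g a), h a)) ((b, c), d)) := by
    have step1 : ∑ x : γ × δ, negMulLog (fibsum p (fun a => (g a, h a)) x)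
        = ∑ c, ∑ d, negMulLog (fibsum p (fun a => (g a, h a)) (c, d)) :=
      Fintype.sum_prod_type (f := fun x : γ × δ => negMulLog (fibsum p (fun a => (g a, h a)) x))
    refine step1.trans ?_
    exact Finset.sum_congr rfl fun c _ => Finset.sum_congr rfl fun d _ => by
      rw [← fibsum_tr2 f g h c d]
  rw [e1, e2, e3, e4]
  exact core

lemma Cf_nonneg {β γ : Type*} [Fintype β] [Fintype γ] (hp : ∀ a, 0 ≤ p a)
    (f : α → β) (g : α → γ) : 0 ≤ Cf p f g := by
  have h := Hf_mono' (p := p) hp (f := fun a => (f a, g a)) (g := g) Prod.snd fun a => rfl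
  unfold Cf
  linarith

lemma Cf_chain {β β' γ : Type*} [Fintype β] [Fintype β'] [Fintype γ]
    (f : α → β) (f' : α → β') (g : α → γ) :
    Cf p (fun a => (f a, f' a)) g = Cf p f' g + Cf p f (fun a => (f' a, g a)) := by
  unfold Cf
  rw [← Hf_assoc]
  ring

lemma Cf_congr_left {β β' γ : Type*} [Fintype β] [Fintype β'] [Fintype γ]
    {f : α → β} {f' : α → β'} (g : α → γ) (k : β → β') (l : β' → β)
    (hk : ∀ a, f' a = k (f a)) (hl : ∀ a, f a = l (f' a)) :
    Cf p f g = Cf p f' g := by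
  unfold Cf
  rw [Hf_det_congr (fun a => (f a, g a)) (fun a => (f' a, g a))
    (fun x => (k x.1, x.2)) (fun x => (l x.1, x.2))
    (fun a => show (f' a, g a) = (k (f a), g a) by rw [hk a])
    (fun a => show (f a, g a) = (l (f' a), g a) by rw [hl a])]

lemma Cf_congr_right {β γ γ' : Type*} [Fintype β] [Fintype γ] [Fintype γ']
    (f : α → β) {g : α → γ} {g' : α → γ'} (k : γ → γ') (l : γ' → γ)
    (hk : ∀ a, g' a = k (g a)) (hl : ∀ a, g a = l (g' a)) :
    Cf p f g = Cf p f g' := by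
  unfold Cf
  rw [Hf_det_congr (fun a => (f a, g a)) (fun a => (f a, g' a))
    (fun x => (x.1, k x.2)) (fun x => (x.1, l x.2))
    (fun a => show (f a, g' a) = (f a, k (g a)) by rw [hk a])
    (fun a => show (f a, g a) = (f a, l (g' a)) by rw [hl a]),
    Hf_det_congr g g' k l hk hl]

lemma Cf_cond_reduce {β γ δ : Type*} [Fintype β] [Fintype γ] [Fintype δ] (hp : ∀ a, 0 ≤ p a)
    (f : α → β) (g : α → γ) (h : α → δ) :
    Cf p f (fun a => (g a, h a)) ≤ Cf p f h := by
  unfold Cf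
  have hassoc := Hf_assoc (p := p) f g h
  have hsub := Hf_submod hp f g h
  linarith

lemma Cf_cond_coarsen {β γ γ' : Type*} [Fintype β] [Fintype γ] [Fintype γ']
    (hp : ∀ a, 0 ≤ p a) (f : α → β) {g : α → γ} {g' : α → γ'} (k : γ → γ')
    (hk : ∀ a, g' a = k (g a)) :
    Cf p f g ≤ Cf p f g' := by
  have h1 : Cf p f g = Cf p f (fun a => (g a, g' a)) :=
    Cf_congr_right f (fun c => (c, k c)) Prod.fst
      (fun a => by rw [hk a]) (fun a => rfl)
  rw [h1]
  exact Cf_cond_reduce hp f g g'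

lemma Hf_indep {β γ : Type*} [Fintype β] [Fintype γ] (hs : ∑ a, p a = 1)
    {f : α → β} {g : α → γ}
    (hfact : ∀ b c, fibsum p (fun a => (f a, g a)) (b, c) = fibsum p f b * fibsum p g c) :
    Hf p (fun a => (f a, g a)) = Hf p f + Hf p g := by
  unfold Hf
  rw [Fintype.sum_prod_type (f := fun x : β × γ => negMulLog (fibsum p (fun a => (f a, g a)) x))]
  have h1 : ∀ b c, negMulLog (fibsum p (fun a => (f a, g a)) (b, c))
      = fibsum p g c * negMulLog (fibsum p f b) + fibsum p f b * negMulLog (fibsum p g c) :=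
    fun b c => by rw [hfact b c, negMulLog_mul]
  rw [Finset.sum_congr rfl fun b _ => Finset.sum_congr rfl fun c _ => h1 b c]
  have h2 : ∀ b, ∑ c, (fibsum p g c * negMulLog (fibsum p f b)
        + fibsum p f b * negMulLog (fibsum p g c))
      = negMulLog (fibsum p f b) + fibsum p f b * Hf p g := by
    intro b
    rw [Finset.sum_add_distrib, ← Finset.sum_mul, ← Finset.mul_sum, fibsum_total, hs,
      one_mul]
    rfl
  rw [Finset.sum_congr rfl fun b _ => h2 b, Finset.sum_add_distrib, ← Finset.sum_mul,
    fibsum_total, hs, one_mul]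
  rfl

lemma fact_comp {β γ β' γ' : Type*} [Fintype β] [Fintype γ] {f : α → β} {g : α → γ}
    (hfact : ∀ b c, fibsum p (fun a => (f a, g a)) (b, c) = fibsum p f b * fibsum p g c)
    (k : β → β') (l : γ → γ') (b' : β') (c' : γ') :
    fibsum p (fun a => (k (f a), l (g a))) (b', c')
      = fibsum p (fun a => k (f a)) b' * fibsum p (fun a => l (g a)) c' := by
  have h1 : fibsum p (fun a => (k (f a), l (g a))) (b', c')
      = fibsum p (fun a => (fun x : β × γ => (k x.1, l x.2)) ((fun a => (f a, g a)) a))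
          (b', c') := rfl
  rw [h1, fibsum_comp (fun a => (f a, g a)) (fun x : β × γ => (k x.1, l x.2)) (b', c'),
    fibsum_comp f k b', fibsum_comp g l c']
  have h2 : Finset.univ.filter (fun x : β × γ => (k x.1, l x.2) = (b', c'))
      = (Finset.univ.filter (fun b => k b = b')) ×ˢ (Finset.univ.filter (fun c => l c = c')) := by
    ext x
    simp only [Finset.mem_filter, Finset.mem_univ, true_and, Prod.mk.injEq,
      Finset.mem_product]
  refine Eq.trans (Finset.sum_congr h2 (fun x _ => rfl)) ?_
  rw [Finset.sum_product]
  rw [Finset.sum_congr rfl fun b (_ : b ∈ Finset.univ.filter (fun b => k b = b')) =>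
    Finset.sum_congr rfl fun c (_ : c ∈ Finset.univ.filter (fun c => l c = c')) => hfact b c]
  exact (Finset.sum_mul_sum _ _ _ _).symm

lemma Cf_drop_indep {β γ δ : Type*} [Fintype β] [Fintype γ] [Fintype δ] (hs : ∑ a, p a = 1)
    {f : α → β} {g : α → γ} {v : α → δ}
    (hfact : ∀ x c, fibsum p (fun a => ((f a, g a), v a)) (x, c)
      = fibsum p (fun a => (f a, g a)) x * fibsum p v c) :
    Cf p f (fun a => (g a, v a)) = Cf p f g := by
  unfold Cf
  have h1 : Hf p (fun a => (f a, (g a, v a))) = Hf p (fun a => ((f a, g a), v a)) :=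
    Hf_assoc f g v
  have h2 : Hf p (fun a => ((f a, g a), v a)) = Hf p (fun a => (f a, g a)) + Hf p v :=
    Hf_indep hs hfact
  have hfact2 : ∀ c d, fibsum p (fun a => (g a, v a)) (c, d)
      = fibsum p g c * fibsum p v d := by
    intro c d
    have h3 := fact_comp hfact (fun x : β × γ => x.2) id c d
    have h4 : (fun a => ((fun x : β × γ => x.2) ((f a, g a)), id (v a)))
        = (fun a => (g a, v a)) := rfl
    have h5 : (fun a => (fun x : β × γ => x.2) ((f a, g a))) = g := rfl
    have h6 : (fun a => id (v a)) = v := rfl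
    rw [h4, h5, h6] at h3
    exact h3
  have h7 : Hf p (fun a => (g a, v a)) = Hf p g + Hf p v := Hf_indep hs hfact2
  rw [h1, h2, h7]
  ring

end AbstractEntropy

section Bridge

variable {α : Type*} [Fintype α] [MeasurableSpace α] [MeasurableSingletonClass α]

/-- The weight function (pmf) of a random variable `W`. -/
noncomputable def wp (μ : Measure Ω) (W : Ω → α) : α → ℝ := fun a => (μ (W ⁻¹' {a})).toReal

variable (μ : Measure Ω) [IsProbabilityMeasure μ] {W : Ω → α}

omit [Fintype α] [MeasurableSpace α] [MeasurableSingletonClass α] [IsProbabilityMeasure μ] in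
lemma wp_nonneg : ∀ a, 0 ≤ wp μ W a := fun _ => ENNReal.toReal_nonneg

lemma fibsum_wp {β : Type*} (hW : Measurable W) (f : α → β) (b : β) :
    fibsum (wp μ W) f b = (μ ((fun ω => f (W ω)) ⁻¹' {b})).toReal := by
  classical
  have hset : ((fun ω => f (W ω)) ⁻¹' {b})
      = ⋃ a ∈ (Finset.univ.filter (fun a => f a = b) : Finset α), W ⁻¹' {a} := by
    ext ω
    simp only [Set.mem_preimage, Set.mem_singleton_iff, Set.mem_iUnion, Finset.mem_filter,
      Finset.mem_univ, true_and, exists_prop]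
    constructor
    · intro h
      exact ⟨W ω, h, rfl⟩
    · rintro ⟨a, ha, hWa⟩
      rw [hWa]; exact ha
  have hd : ((Finset.univ.filter (fun a => f a = b) : Finset α) : Set α).PairwiseDisjoint
      (fun a => W ⁻¹' {a}) := by
    intro x _ y _ hxy
    exact (Set.disjoint_singleton.2 hxy).preimage W
  have hm : ∀ a ∈ Finset.univ.filter (fun a => f a = b), MeasurableSet (W ⁻¹' {a}) :=
    fun a _ => hW (measurableSet_singleton a)
  rw [hset, measure_biUnion_finset hd hm,
    ENNReal.toReal_sum (fun a _ => measure_ne_top μ _)]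
  rfl

lemma wp_total (hW : Measurable W) : ∑ a, wp μ W a = 1 := by
  have hd : ((Finset.univ : Finset α) : Set α).PairwiseDisjoint (fun a => W ⁻¹' {a}) := by
    intro x _ y _ hxy
    exact (Set.disjoint_singleton.2 hxy).preimage W
  have hm : ∀ a ∈ (Finset.univ : Finset α), MeasurableSet (W ⁻¹' {a}) :=
    fun a _ => hW (measurableSet_singleton a)
  have hU : (⋃ a ∈ (Finset.univ : Finset α), W ⁻¹' {a}) = Set.univ := by
    ext ω; simp
  calc ∑ a, wp μ W a
      = (∑ a ∈ Finset.univ, μ (W ⁻¹' {a})).toReal :=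
        (ENNReal.toReal_sum (fun a _ => measure_ne_top μ _)).symm
    _ = (μ (⋃ a ∈ (Finset.univ : Finset α), W ⁻¹' {a})).toReal := by
        rw [measure_biUnion_finset hd hm]
    _ = 1 := by rw [hU, measure_univ, ENNReal.toReal_one]

lemma ent_wp {β : Type*} [Fintype β] (hW : Measurable W) (f : α → β) :
    ent μ (fun ω => f (W ω)) = Hf (wp μ W) f := by
  unfold ent Hf
  exact Finset.sum_congr rfl fun b _ => by rw [fibsum_wp μ hW f b]

lemma cent_wp {β γ : Type*} [Fintype β] [Fintype γ] (hW : Measurable W) (f : α → β) (g : α → γ) :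
    cent μ (fun ω => f (W ω)) (fun ω => g (W ω)) = Cf (wp μ W) f g := by
  unfold cent Cf
  rw [← ent_wp μ hW g, ← ent_wp μ hW (fun a => (f a, g a))]

end Bridge

/-- Restriction of a full message tuple to the coordinates in `S`. -/
def resF (S : Finset (Fin n)) (w : ∀ i : ↥(Finset.univ : Finset (Fin n)), 𝒳 i.1) :
    ∀ i : ↥S, 𝒳 i.1 :=
  fun i => w ⟨i.1, Finset.mem_univ _⟩

/-- Server outputs computed from a full message tuple. -/
def outF (φ : ∀ J : Finset (Fin n), (∀ j : J, 𝒳 j.1) → 𝒴 J) (pr : Finset (Fin n) → Prop)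
    (w : ∀ i : ↥(Finset.univ : Finset (Fin n)), 𝒳 i.1) :
    ∀ J : {J : Finset (Fin n) // pr J}, 𝒴 J.1 :=
  fun J => φ J.1 (fun j => w ⟨j.1, Finset.mem_univ _⟩)

/-- **Entropy form of Theorem 2**: if `X_1, …, X_n` are mutually independent,
`U, V` are disjoint, `H[X_U | Y_N] = 0`, `H[X_{[n]∖(U∪V)} | Y_N, X_{U∪V}] = 0` and
`H[X_V | Y_N, X_{V̄}] = 0`, then with `Q = {J ∈ N : J ∩ V ≠ ∅, J ⊄ U ∪ V}` one has
`H[X_{[n]}] ≤ H[Y_N] + H[Y_Q | X_{U∪V}]`. -/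
theorem theorem2_entropy_form
    [∀ i, Fintype (𝒳 i)] [∀ i, Nonempty (𝒳 i)]
    [∀ i, MeasurableSpace (𝒳 i)] [∀ i, DiscreteMeasurableSpace (𝒳 i)]
    [∀ J, Fintype (𝒴 J)]
    (μ : Measure Ω) [IsProbabilityMeasure μ]
    (X : ∀ i, Ω → 𝒳 i) (hXmeas : ∀ i, Measurable (X i))
    (hindep : ProbabilityTheory.iIndepFun X μ)
    (φ : ∀ J : Finset (Fin n), (∀ j : J, 𝒳 j.1) → 𝒴 J)
    (U V : Finset (Fin n)) (hUV : Disjoint U V)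
    (hU : cent μ (subtuple X U) (outputs φ X (fun J => J.Nonempty)) = 0)
    (hRest : cent μ (subtuple X (Finset.univ \ (U ∪ V)))
      (fun ω => (outputs φ X (fun J => J.Nonempty) ω, subtuple X (U ∪ V) ω)) = 0)
    (hdec : cent μ (subtuple X V)
      (fun ω => (outputs φ X (fun J => J.Nonempty) ω, subtuple X Vᶜ ω)) = 0) :
    ent μ (subtuple X Finset.univ)
      ≤ ent μ (outputs φ X (fun J => J.Nonempty))
        + cent μ (outputs φ X (fun J => J.Nonempty ∧ (J ∩ V).Nonempty ∧ ¬ J ⊆ U ∪ V))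
            (subtuple X (U ∪ V)) := by
  classical
  have hW : Measurable (subtuple X Finset.univ) :=
    measurable_pi_lambda _ (fun i => hXmeas i.1)
  set W := subtuple X Finset.univ with hWdef
  set p : (∀ i : ↥(Finset.univ : Finset (Fin n)), 𝒳 i.1) → ℝ := wp μ W with hpdef
  have hp : ∀ a, 0 ≤ p a := wp_nonneg μ
  have hs : ∑ a, p a = 1 := wp_total μ hW
  -- conversion of hypotheses to the combinatorial level
  have eU : cent μ (subtuple X U) (outputs φ X (fun J => J.Nonempty))
      = Cf p (resF U) (outF φ (fun J => J.Nonempty)) :=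
    cent_wp μ hW (resF U) (outF φ (fun J => J.Nonempty))
  have hU' : Cf p (resF U) (outF φ (fun J => J.Nonempty)) = 0 := by rw [← eU]; exact hU
  have eRest : cent μ (subtuple X (Finset.univ \ (U ∪ V)))
      (fun ω => (outputs φ X (fun J => J.Nonempty) ω, subtuple X (U ∪ V) ω))
      = Cf p (resF (Finset.univ \ (U ∪ V)))
          (fun a => (outF φ (fun J => J.Nonempty) a, resF (U ∪ V) a)) :=
    cent_wp μ hW (resF (Finset.univ \ (U ∪ V)))
      (fun a => (outF φ (fun J => J.Nonempty) a, resF (U ∪ V) a))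
  have hRest' : Cf p (resF (Finset.univ \ (U ∪ V)))
      (fun a => (outF φ (fun J => J.Nonempty) a, resF (U ∪ V) a)) = 0 := by
    rw [← eRest]; exact hRest
  have edec : cent μ (subtuple X V)
      (fun ω => (outputs φ X (fun J => J.Nonempty) ω, subtuple X Vᶜ ω))
      = Cf p (resF V) (fun a => (outF φ (fun J => J.Nonempty) a, resF Vᶜ a)) :=
    cent_wp μ hW (resF V) (fun a => (outF φ (fun J => J.Nonempty) a, resF Vᶜ a))
  have hdec' : Cf p (resF V) (fun a => (outF φ (fun J => J.Nonempty) a, resF Vᶜ a)) = 0 := by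
    rw [← edec]; exact hdec
  -- conversion of the goal
  have eAll : ent μ W = Hf p (resF (𝒳 := 𝒳) Finset.univ) :=
    ent_wp μ hW (resF Finset.univ)
  have eYN : ent μ (outputs φ X (fun J => J.Nonempty))
      = Hf p (outF φ (fun J => J.Nonempty)) :=
    ent_wp μ hW (outF φ (fun J => J.Nonempty))
  have eQ : cent μ (outputs φ X (fun J => J.Nonempty ∧ (J ∩ V).Nonempty ∧ ¬ J ⊆ U ∪ V))
        (subtuple X (U ∪ V))
      = Cf p (outF φ (fun J => J.Nonempty ∧ (J ∩ V).Nonempty ∧ ¬ J ⊆ U ∪ V))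
          (resF (U ∪ V)) :=
    cent_wp μ hW (outF φ (fun J => J.Nonempty ∧ (J ∩ V).Nonempty ∧ ¬ J ⊆ U ∪ V))
      (resF (U ∪ V))
  rw [eAll, eYN, eQ]
  -- abbreviations
  set gAll := resF (𝒳 := 𝒳) Finset.univ with hgAll
  set gU := resF (𝒳 := 𝒳) U with hgU
  set gV := resF (𝒳 := 𝒳) V with hgV
  set gR := resF (𝒳 := 𝒳) (Finset.univ \ (U ∪ V)) with hgR
  set gUV := resF (𝒳 := 𝒳) (U ∪ V) with hgUV
  set gVc := resF (𝒳 := 𝒳) Vᶜ with hgVc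
  set yN := outF φ (fun J => J.Nonempty) with hyN
  set yQ := outF φ (fun J => J.Nonempty ∧ (J ∩ V).Nonempty ∧ ¬ J ⊆ U ∪ V) with hyQ
  set yA := outF φ (fun J => J.Nonempty ∧ ¬(J ∩ V).Nonempty) with hyA
  -- membership helper facts
  have hUsub : ∀ i : Fin n, i ∈ U → i ∈ Vᶜ := fun i hi =>
    Finset.mem_compl.mpr (fun hv => Finset.disjoint_left.mp hUV hi hv)
  have hRsub : ∀ i : Fin n, i ∈ Finset.univ \ (U ∪ V) → i ∈ Vᶜ := fun i hi =>
    Finset.mem_compl.mpr (fun hv => (Finset.mem_sdiff.mp hi).2 (Finset.mem_union_right U hv))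
  -- pointwise merge identities
  have hUV' : ∀ a, gUV a = fun i : ↥(U ∪ V) =>
      if h1 : i.1 ∈ U then gU a ⟨i.1, h1⟩
      else gV a ⟨i.1, (Finset.mem_union.mp i.2).resolve_left h1⟩ := by
    intro a
    funext i
    by_cases h1 : i.1 ∈ U
    · rw [dif_pos h1]; rfl
    · rw [dif_neg h1]; rfl
  have hVc' : ∀ a, gVc a = fun i : ↥Vᶜ =>
      if h1 : i.1 ∈ U then gU a ⟨i.1, h1⟩
      else gR a ⟨i.1, Finset.mem_sdiff.mpr ⟨Finset.mem_univ _,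
        fun hc => (Finset.mem_union.mp hc).elim h1 (fun hv => Finset.mem_compl.mp i.2 hv)⟩⟩ := by
    intro a
    funext i
    by_cases h1 : i.1 ∈ U
    · rw [dif_pos h1]; rfl
    · rw [dif_neg h1]; rfl
  have hAll' : ∀ a, gAll a = fun i : ↥(Finset.univ : Finset (Fin n)) =>
      if h1 : i.1 ∈ U then gU a ⟨i.1, h1⟩
      else if h2 : i.1 ∈ V then gV a ⟨i.1, h2⟩
      else gR a ⟨i.1, Finset.mem_sdiff.mpr ⟨Finset.mem_univ _,
        fun hc => (Finset.mem_union.mp hc).elim h1 h2⟩⟩ := by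
    intro a
    funext i
    by_cases h1 : i.1 ∈ U
    · rw [dif_pos h1]; rfl
    · rw [dif_neg h1]
      by_cases h2 : i.1 ∈ V
      · rw [dif_pos h2]; rfl
      · rw [dif_neg h2]; rfl
  have hyNsplit : ∀ a, yN a = fun J : {J : Finset (Fin n) // J.Nonempty} =>
      if h1 : (J.1 ∩ V).Nonempty then
        (if h2 : J.1 ⊆ U ∪ V then φ J.1 (fun j => gUV a ⟨j.1, h2 j.2⟩)
         else yQ a ⟨J.1, ⟨J.2, h1, h2⟩⟩)
      else yA a ⟨J.1, ⟨J.2, h1⟩⟩ := by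
    intro a
    funext J
    by_cases h1 : (J.1 ∩ V).Nonempty
    · rw [dif_pos h1]
      by_cases h2 : J.1 ⊆ U ∪ V
      · rw [dif_pos h2]; rfl
      · rw [dif_neg h2]; rfl
    · rw [dif_neg h1]; rfl
  -- Step 1: decompose H[X_[n]] along (R, V, U, Y_N)
  have step1 : Hf p gAll = Hf p (fun a => (((gR a, gV a), gU a), yN a)) :=
    Hf_det_congr gAll (fun a => (((gR a, gV a), gU a), yN a))
      (fun w => (((resF (Finset.univ \ (U ∪ V)) w, resF V w), resF U w),
        outF φ (fun J => J.Nonempty) w))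
      (fun x => fun i : ↥(Finset.univ : Finset (Fin n)) =>
        if h1 : i.1 ∈ U then x.1.2 ⟨i.1, h1⟩
        else if h2 : i.1 ∈ V then x.1.1.2 ⟨i.1, h2⟩
        else x.1.1.1 ⟨i.1, Finset.mem_sdiff.mpr ⟨Finset.mem_univ _,
          fun hc => (Finset.mem_union.mp hc).elim h1 h2⟩⟩)
      (fun a => rfl) (fun a => hAll' a)
  have step2 : Hf p (fun a => (((gR a, gV a), gU a), yN a))
      = Hf p yN + Cf p (fun a => ((gR a, gV a), gU a)) yN := by
    unfold Cf; ring
  have step3 : Cf p (fun a => ((gR a, gV a), gU a)) yN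
      = Cf p gU yN + Cf p (fun a => (gR a, gV a)) (fun a => (gU a, yN a)) :=
    Cf_chain (fun a => (gR a, gV a)) gU yN
  have step4 : Cf p (fun a => (gR a, gV a)) (fun a => (gU a, yN a))
      = Cf p (fun a => (gV a, gR a)) (fun a => (gU a, yN a)) :=
    Cf_congr_left (f := fun a => (gR a, gV a)) (f' := fun a => (gV a, gR a))
      (fun a => (gU a, yN a)) Prod.swap Prod.swap (fun a => rfl) (fun a => rfl)
  have step5 : Cf p (fun a => (gV a, gR a)) (fun a => (gU a, yN a))
      = Cf p gR (fun a => (gU a, yN a)) + Cf p gV (fun a => (gR a, (gU a, yN a))) :=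
    Cf_chain gV gR (fun a => (gU a, yN a))
  have step6 : Cf p gV (fun a => (gR a, (gU a, yN a))) = Cf p gV (fun a => (yN a, gVc a)) :=
    Cf_congr_right gV
      (k := fun x => (x.2.2, fun i : ↥Vᶜ =>
        if h1 : i.1 ∈ U then x.2.1 ⟨i.1, h1⟩
        else x.1 ⟨i.1, Finset.mem_sdiff.mpr ⟨Finset.mem_univ _,
          fun hc => (Finset.mem_union.mp hc).elim h1
            (fun hv => Finset.mem_compl.mp i.2 hv)⟩⟩))
      (l := fun x => ((fun i : ↥(Finset.univ \ (U ∪ V)) => x.2 ⟨i.1, hRsub i.1 i.2⟩),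
        ((fun i : ↥U => x.2 ⟨i.1, hUsub i.1 i.2⟩), x.1)))
      (fun a => by rw [hVc' a]) (fun a => rfl)
  have hHall : Hf p gAll = Hf p yN + Cf p gR (fun a => (gU a, yN a)) := by
    rw [step1, step2, step3, step4, step5, step6, hdec', hU']; ring
  -- Step 2: bound the remaining conditional entropy
  have step8 : Cf p gR (fun a => (gU a, yN a)) ≤ Cf p gR (fun a => (yA a, gU a)) :=
    Cf_cond_coarsen hp gR (g := fun a => (gU a, yN a)) (g' := fun a => (yA a, gU a))
      (fun x => ((fun J : {J : Finset (Fin n) // J.Nonempty ∧ ¬(J ∩ V).Nonempty} =>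
        x.2 ⟨J.1, J.2.1⟩), x.1))
      (fun a => rfl)
  -- independence of X_V from everything determined by X_{V^c}
  have hIndep : ProbabilityTheory.IndepFun (subtuple X Vᶜ) (subtuple X V) μ :=
    hindep.indepFun_finset Vᶜ V disjoint_compl_left hXmeas
  have hfact0 : ∀ b c, fibsum p (fun a => (gVc a, gV a)) (b, c)
      = fibsum p gVc b * fibsum p gV c := by
    intro b c
    have hset : ((fun ω => (gVc (W ω), gV (W ω))) ⁻¹' {(b, c)})
        = subtuple X Vᶜ ⁻¹' {b} ∩ subtuple X V ⁻¹' {c} := by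
      ext ω
      simp only [Set.mem_preimage, Set.mem_singleton_iff, Set.mem_inter_iff, Prod.mk.injEq]
      exact Iff.rfl
    have hmeas := hIndep.measure_inter_preimage_eq_mul _ _ (measurableSet_singleton b)
      (measurableSet_singleton c)
    calc fibsum p (fun a => (gVc a, gV a)) (b, c)
        = (μ ((fun ω => (gVc (W ω), gV (W ω))) ⁻¹' {(b, c)})).toReal :=
          fibsum_wp μ hW _ _
      _ = (μ (subtuple X Vᶜ ⁻¹' {b} ∩ subtuple X V ⁻¹' {c})).toReal := by rw [hset]
      _ = (μ (subtuple X Vᶜ ⁻¹' {b}) * μ (subtuple X V ⁻¹' {c})).toReal := by rw [hmeas]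
      _ = fibsum p gVc b * fibsum p gV c := by
          rw [ENNReal.toReal_mul]
          exact congrArg₂ (· * ·) (fibsum_wp μ hW gVc b).symm (fibsum_wp μ hW gV c).symm
  have hfactRAU : ∀ x c, fibsum p (fun a => ((gR a, (yA a, gU a)), gV a)) (x, c)
      = fibsum p (fun a => (gR a, (yA a, gU a))) x * fibsum p gV c := by
    intro x c
    exact fact_comp hfact0
      (k := fun vc => ((fun i : ↥(Finset.univ \ (U ∪ V)) => vc ⟨i.1, hRsub i.1 i.2⟩),
        ((fun J : {J : Finset (Fin n) // J.Nonempty ∧ ¬(J ∩ V).Nonempty} =>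
          φ J.1 (fun j => vc ⟨j.1, Finset.mem_compl.mpr
            (fun hv => J.2.2 ⟨j.1, Finset.mem_inter.mpr ⟨j.2, hv⟩⟩)⟩)),
         (fun i : ↥U => vc ⟨i.1, hUsub i.1 i.2⟩))))
      (l := id) x c
  have step9 : Cf p gR (fun a => ((yA a, gU a), gV a)) = Cf p gR (fun a => (yA a, gU a)) :=
    Cf_drop_indep hs hfactRAU
  have step10 : Cf p gR (fun a => ((yA a, gU a), gV a)) = Cf p gR (fun a => (yA a, gUV a)) :=
    Cf_congr_right gR
      (k := fun x => (x.1.1, fun i : ↥(U ∪ V) =>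
        if h1 : i.1 ∈ U then x.1.2 ⟨i.1, h1⟩
        else x.2 ⟨i.1, (Finset.mem_union.mp i.2).resolve_left h1⟩))
      (l := fun x => ((x.1, fun i : ↥U => x.2 ⟨i.1, Finset.mem_union_left V i.2⟩),
        fun i : ↥V => x.2 ⟨i.1, Finset.mem_union_right U i.2⟩))
      (fun a => by rw [hUV' a]) (fun a => rfl)
  have c1 : Cf p (fun a => (yQ a, gR a)) (fun a => (yA a, gUV a))
      = Cf p gR (fun a => (yA a, gUV a)) + Cf p yQ (fun a => (gR a, (yA a, gUV a))) :=
    Cf_chain yQ gR (fun a => (yA a, gUV a))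
  have c2 : Cf p (fun a => (yQ a, gR a)) (fun a => (yA a, gUV a))
      = Cf p (fun a => (gR a, yQ a)) (fun a => (yA a, gUV a)) :=
    Cf_congr_left (f := fun a => (yQ a, gR a)) (f' := fun a => (gR a, yQ a))
      (fun a => (yA a, gUV a)) Prod.swap Prod.swap (fun a => rfl) (fun a => rfl)
  have c3 : Cf p (fun a => (gR a, yQ a)) (fun a => (yA a, gUV a))
      = Cf p yQ (fun a => (yA a, gUV a)) + Cf p gR (fun a => (yQ a, (yA a, gUV a))) :=
    Cf_chain gR yQ (fun a => (yA a, gUV a))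
  have c4 : Cf p gR (fun a => (yQ a, (yA a, gUV a)))
      = Cf p gR (fun a => (yN a, gUV a)) :=
    Cf_congr_right gR
      (k := fun x => ((fun J : {J : Finset (Fin n) // J.Nonempty} =>
        if h1 : (J.1 ∩ V).Nonempty then
          (if h2 : J.1 ⊆ U ∪ V then φ J.1 (fun j => x.2.2 ⟨j.1, h2 j.2⟩)
           else x.1 ⟨J.1, ⟨J.2, h1, h2⟩⟩)
        else x.2.1 ⟨J.1, ⟨J.2, h1⟩⟩), x.2.2))
      (l := fun x => ((fun J : {J : Finset (Fin n) //
          J.Nonempty ∧ (J ∩ V).Nonempty ∧ ¬ J ⊆ U ∪ V} => x.1 ⟨J.1, J.2.1⟩),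
        ((fun J : {J : Finset (Fin n) // J.Nonempty ∧ ¬(J ∩ V).Nonempty} =>
          x.1 ⟨J.1, J.2.1⟩), x.2)))
      (fun a => by rw [hyNsplit a]) (fun a => rfl)
  have c5 : Cf p gR (fun a => (yN a, gUV a)) = 0 := hRest'
  have c6 : Cf p yQ (fun a => (yA a, gUV a)) ≤ Cf p yQ gUV :=
    Cf_cond_coarsen hp yQ (g := fun a => (yA a, gUV a)) (g' := gUV) Prod.snd (fun a => rfl)
  have c7 : 0 ≤ Cf p yQ (fun a => (gR a, (yA a, gUV a))) := Cf_nonneg hp _ _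
  linarith [hHall, step8, step9, step10, c1, c2, c3, c4, c5, c6, c7]


end DistIndexCoding
end

section
/- Let t_1, …, t_n and (r_J : J ∈ N) be natural numbers, and for each J ∈ N let φ_J : (Π_{j∈J} Fin(2^{t_j})) → Fin(2^{r_J}); for a message tuple x ∈ Π_{i∈[n]} Fin(2^{t_i}) write y(x) = (φ_J(x_J) : J ∈ N). Suppose U, V ⊆ [n] are disjoint and there exist functions g_1, g_2, g_3 such that for every message tuple x: g_1(y(x)) = x_U, g_2(y(x), x_{U∪V}) = x_{[n]∖(U∪V)}, and g_3(y(x), x_{[n]∖V}) = x_V. Then Σ_{i∈[n]} t_i ≤ Σ_{J∈N} r_J + Σ_{J∈N : J∩V≠∅, J⊄U∪V} r_J. (Zero-error, single-shot form of Theorem 2, the sum-rate outer bound for distributed index coding.) -/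
/-!
Zero-error, single-shot form of Theorem 2: a distributed index code has one server
for each nonempty subset `J` of `Fin n`, observing the messages `x_J` and
broadcasting an `r_J`-bit codeword `φ_J (x_J) ∈ Fin (2 ^ r_J)`; each message `x_i`
is a `t_i`-bit string, i.e. an element of `Fin (2 ^ t_i)`.
-/

namespace DistIndexCoding

variable {n : ℕ}

/-- The tuple of all server outputs `y(x) = (φ_J(x_J) : J ∈ N)`. -/
def encode (t : Fin n → ℕ) (r : Finset (Fin n) → ℕ)
    (φ : ∀ J : Finset (Fin n), (∀ j : J, Fin (2 ^ t j.1)) → Fin (2 ^ r J))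
    (x : ∀ i, Fin (2 ^ t i)) :
    ∀ J : {J : Finset (Fin n) // J.Nonempty}, Fin (2 ^ r J.1) :=
  fun J => φ J.1 (fun j => x j.1)

/-- **Zero-error, single-shot form of Theorem 2** (sum-rate outer bound for
distributed index coding): if disjoint `U, V ⊆ [n]` are such that `x_U` is
recoverable from `y(x)`, `x_{[n]∖(U∪V)}` is recoverable from `(y(x), x_{U∪V})`, and
`x_V` is recoverable from `(y(x), x_{V̄})`, then
`Σ_i t_i ≤ Σ_{J∈N} r_J + Σ_{J∈N : J∩V≠∅, J⊄U∪V} r_J`. -/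
theorem theorem2_zero_error (t : Fin n → ℕ) (r : Finset (Fin n) → ℕ)
    (φ : ∀ J : Finset (Fin n), (∀ j : J, Fin (2 ^ t j.1)) → Fin (2 ^ r J))
    (U V : Finset (Fin n)) (hUV : Disjoint U V)
    (g₁ : (∀ J : {J : Finset (Fin n) // J.Nonempty}, Fin (2 ^ r J.1)) →
          ∀ i : U, Fin (2 ^ t i.1))
    (g₂ : (∀ J : {J : Finset (Fin n) // J.Nonempty}, Fin (2 ^ r J.1)) →
          (∀ i : (U ∪ V : Finset (Fin n)), Fin (2 ^ t i.1)) →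
          ∀ i : (Finset.univ \ (U ∪ V) : Finset (Fin n)), Fin (2 ^ t i.1))
    (g₃ : (∀ J : {J : Finset (Fin n) // J.Nonempty}, Fin (2 ^ r J.1)) →
          (∀ i : (Vᶜ : Finset (Fin n)), Fin (2 ^ t i.1)) →
          ∀ i : (V : Finset (Fin n)), Fin (2 ^ t i.1))
    (h₁ : ∀ x : ∀ i, Fin (2 ^ t i),
      g₁ (encode t r φ x) = fun i : U => x i.1)
    (h₂ : ∀ x : ∀ i, Fin (2 ^ t i),
      g₂ (encode t r φ x) (fun i : (U ∪ V : Finset (Fin n)) => x i.1)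
        = fun i : (Finset.univ \ (U ∪ V) : Finset (Fin n)) => x i.1)
    (h₃ : ∀ x : ∀ i, Fin (2 ^ t i),
      g₃ (encode t r φ x) (fun i : (Vᶜ : Finset (Fin n)) => x i.1)
        = fun i : (V : Finset (Fin n)) => x i.1) :
    ∑ i, t i
      ≤ (∑ J ∈ Finset.univ.filter (fun J : Finset (Fin n) => J.Nonempty), r J)
        + ∑ J ∈ Finset.univ.filter
            (fun J : Finset (Fin n) => J.Nonempty ∧ (J ∩ V).Nonempty ∧ ¬ J ⊆ U ∪ V), r J := by
  classical
  set P : Finset (Fin n) → Prop :=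
    fun J => J.Nonempty ∧ (J ∩ V).Nonempty ∧ ¬ J ⊆ U ∪ V with hP
  set m : (∀ i, Fin (2 ^ t i)) → (∀ i, Fin (2 ^ t i)) :=
    fun x i => if i ∈ V then ⟨0, pow_pos two_pos _⟩ else x i with hm
  set F : (∀ i, Fin (2 ^ t i)) →
      (∀ J : {J : Finset (Fin n) // J.Nonempty}, Fin (2 ^ r J.1)) ×
      (∀ J : {J : Finset (Fin n) // P J}, Fin (2 ^ r J.1)) :=
    fun x => (encode t r φ x, fun J => φ J.1 (fun j => m x j.1)) with hF
  have hinj : Function.Injective F := by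
    intro x₁ x₂ hFeq
    have hE : encode t r φ x₁ = encode t r φ x₂ := congrArg Prod.fst hFeq
    have hS : ∀ J : {J : Finset (Fin n) // P J},
        φ J.1 (fun j => m x₁ j.1) = φ J.1 (fun j => m x₂ j.1) :=
      fun J => congrFun (congrArg Prod.snd hFeq) J
    have hU : ∀ i ∈ U, x₁ i = x₂ i := by
      intro i hi
      have h := (h₁ x₁).symm.trans (by rw [hE, h₁ x₂] :
        g₁ (encode t r φ x₁) = fun i : U => x₂ i.1)
      exact congrFun h ⟨i, hi⟩
    have hmUV : ∀ i ∈ U ∪ V, m x₁ i = m x₂ i := by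
      intro i hi
      by_cases hiV : i ∈ V
      · simp [hm, hiV]
      · have hiU : i ∈ U := (Finset.mem_union.mp hi).resolve_right hiV
        simp [hm, hiV, hU i hiU]
    have hmoff : ∀ (x : ∀ i, Fin (2 ^ t i)) i, i ∉ V → m x i = x i := by
      intro x i hi; simp [hm, hi]
    have hE' : encode t r φ (m x₁) = encode t r φ (m x₂) := by
      funext J
      by_cases hJV : (J.1 ∩ V).Nonempty
      · by_cases hJUV : J.1 ⊆ U ∪ V
        · show φ J.1 _ = φ J.1 _
          congr 1
          funext j
          exact hmUV j.1 (hJUV j.2)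
        · exact hS ⟨J.1, J.2, hJV, hJUV⟩
      · have e₁ : (fun j : J.1 => m x₁ j.1) = fun j : J.1 => x₁ j.1 := by
          funext j
          exact hmoff x₁ j.1 (fun h => hJV ⟨j.1, Finset.mem_inter.mpr ⟨j.2, h⟩⟩)
        have e₂ : (fun j : J.1 => m x₂ j.1) = fun j : J.1 => x₂ j.1 := by
          funext j
          exact hmoff x₂ j.1 (fun h => hJV ⟨j.1, Finset.mem_inter.mpr ⟨j.2, h⟩⟩)
        show φ J.1 _ = φ J.1 _
        rw [e₁, e₂]
        exact congrFun hE J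
    have hcompl : ∀ i ∈ Finset.univ \ (U ∪ V), x₁ i = x₂ i := by
      intro i hi
      have hiV : i ∉ V := fun h =>
        (Finset.mem_sdiff.mp hi).2 (Finset.mem_union_right _ h)
      have e₁ : (fun i : (U ∪ V : Finset (Fin n)) => m x₁ i.1)
          = fun i : (U ∪ V : Finset (Fin n)) => m x₂ i.1 := by
        funext j; exact hmUV j.1 j.2
      have h2 := (h₂ (m x₁)).symm.trans (by rw [hE', e₁, h₂ (m x₂)] :
        g₂ (encode t r φ (m x₁)) (fun i : (U ∪ V : Finset (Fin n)) => m x₁ i.1)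
          = fun i : (Finset.univ \ (U ∪ V) : Finset (Fin n)) => m x₂ i.1)
      have := congrFun h2 ⟨i, hi⟩
      rwa [hmoff x₁ i hiV, hmoff x₂ i hiV] at this
    have hVc : (fun i : (Vᶜ : Finset (Fin n)) => x₁ i.1)
        = fun i : (Vᶜ : Finset (Fin n)) => x₂ i.1 := by
      funext i
      have hiV : i.1 ∉ V := Finset.mem_compl.mp i.2
      by_cases hiU : i.1 ∈ U
      · exact hU i.1 hiU
      · exact hcompl i.1 (Finset.mem_sdiff.mpr ⟨Finset.mem_univ _,
          fun h => ((Finset.mem_union.mp h).elim hiU hiV)⟩)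
    have hV : ∀ i ∈ V, x₁ i = x₂ i := by
      intro i hi
      have h3 := (h₃ x₁).symm.trans (by rw [hE, hVc, h₃ x₂] :
        g₃ (encode t r φ x₁) (fun i : (Vᶜ : Finset (Fin n)) => x₁ i.1)
          = fun i : (V : Finset (Fin n)) => x₂ i.1)
      exact congrFun h3 ⟨i, hi⟩
    funext i
    by_cases hi : i ∈ V
    · exact hV i hi
    · exact congrFun hVc ⟨i, Finset.mem_compl.mpr hi⟩
  have hcard := Fintype.card_le_of_injective F hinj
  have hdom : Fintype.card (∀ i, Fin (2 ^ t i)) = 2 ^ ∑ i, t i := by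
    simp [Fintype.card_pi, Finset.prod_pow_eq_pow_sum]
  have hA : Fintype.card (∀ J : {J : Finset (Fin n) // J.Nonempty}, Fin (2 ^ r J.1))
      = 2 ^ ∑ J ∈ Finset.univ.filter (fun J : Finset (Fin n) => J.Nonempty), r J := by
    rw [Fintype.card_pi]
    simp only [Fintype.card_fin]
    rw [← Finset.prod_pow_eq_pow_sum, ← Finset.prod_subtype
      (Finset.univ.filter (fun J : Finset (Fin n) => J.Nonempty))
      (by simp) (fun J => 2 ^ r J)]
  have hB : Fintype.card (∀ J : {J : Finset (Fin n) // P J}, Fin (2 ^ r J.1))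
      = 2 ^ ∑ J ∈ Finset.univ.filter
          (fun J : Finset (Fin n) => J.Nonempty ∧ (J ∩ V).Nonempty ∧ ¬ J ⊆ U ∪ V), r J := by
    rw [Fintype.card_pi]
    simp only [Fintype.card_fin]
    rw [← Finset.prod_pow_eq_pow_sum, ← Finset.prod_subtype
      (Finset.univ.filter (fun J : Finset (Fin n) => P J))
      (by simp) (fun J => 2 ^ r J)]
  rw [Fintype.card_prod, hdom, hA, hB, ← pow_add] at hcard
  exact (Nat.pow_le_pow_iff_right one_lt_two).mp hcard

end DistIndexCoding
end
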